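/- arXiv:1608.02415 — 6 statements merged into one kernel-verified Lean document; each statement's English description precedes it below -/
import Mathlib

section
/- For any finite set A of at most 2(k+1) vertices in Z^d, there exists a translation vector x in the box {-(k+1),...,k+1}^d such that A is contained in the translated set V∘τ_x, where V is the disjoint union over x in (2k+3)Z^d of translates of the cube N = {1,...,2(k+1)}^d. -/
/-- For any set `A` of at most `2(k+1)` vertices in `ℤ^d`, there is a translation
vector `x ∈ {-(k+1),…,k+1}^d` such that `A ⊆ 𝒱 + x`, where
`𝒱 = {y : y_i ≢ 0 mod (2k+3) for all i}` is the disjoint union of translates of the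
cube `{1,…,2(k+1)}^d` over `(2k+3)ℤ^d`. -/
theorem stmt0 (k d : ℕ) (hd : 1 ≤ d) (A : Finset (Fin d → ℤ))
    (hA : A.card ≤ 2 * (k + 1)) :
    ∃ x : Fin d → ℤ, (∀ i, |x i| ≤ (k : ℤ) + 1) ∧
      ∀ a ∈ A, ∀ i, ¬ ((2 * (k : ℤ) + 3) ∣ (a i - x i)) := by
  haveI : NeZero (2 * k + 3) := ⟨by omega⟩
  have key : ∀ i : Fin d, ∃ x : ℤ, |x| ≤ (k : ℤ) + 1 ∧
      ∀ a ∈ A, ¬ ((2 * (k : ℤ) + 3) ∣ (a i - x)) := by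
    intro i
    have hcardlt : (A.image fun a => ((a i : ZMod (2 * k + 3)))).card
        < Fintype.card (ZMod (2 * k + 3)) := by
      have hl : A.card < 2 * k + 3 := by omega
      have h1 : (A.image fun a => ((a i : ZMod (2 * k + 3)))).card ≤ A.card :=
        Finset.card_image_le
      have hc : Fintype.card (ZMod (2 * k + 3)) = 2 * k + 3 := ZMod.card _
      rw [hc]; exact lt_of_le_of_lt h1 hl
    have hne := (Finset.card_lt_iff_ne_univ (A.image fun a => ((a i : ZMod (2 * k + 3))))).mp hcardlt
    obtain ⟨r, hr⟩ : ∃ r, r ∉ (A.image fun a => ((a i : ZMod (2 * k + 3)))) := by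
      by_contra h
      push_neg at h
      exact hne (Finset.eq_univ_iff_forall.mpr h)
    have hv : r.val < 2 * k + 3 := r.val_lt
    set x : ℤ := if r.val ≤ k + 1 then (r.val : ℤ) else (r.val : ℤ) - (2 * k + 3) with hx
    have hcast : (x : ZMod (2 * k + 3)) = r := by
      have h0 : ((r.val : ℤ) : ZMod (2 * k + 3)) = r := by
        push_cast
        exact ZMod.natCast_rightInverse r
      rw [hx]
      split
      · exact h0
      · push_cast
        push_cast at h0
        rw [sub_eq_iff_eq_add]
        rw [h0]
        have h2 : ((2 * k + 3 : ℕ) : ZMod (2 * k + 3)) = 0 := ZMod.natCast_self _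
        push_cast at h2
        rw [h2, add_zero]
    refine ⟨x, ?_, ?_⟩
    · clear hcardlt hne hr hcast
      rw [hx]; split <;> rw [abs_le] <;> constructor <;> push_cast <;> omega
    · intro a ha hdvd
      have : ((a i - x : ℤ) : ZMod (2 * k + 3)) = 0 := by
        have he : ((2 * k + 3 : ℕ) : ℤ) = 2 * (k : ℤ) + 3 := by push_cast; ring
        exact (ZMod.intCast_zmod_eq_zero_iff_dvd _ _).mpr (he ▸ hdvd)
      have heq : ((a i : ℤ) : ZMod (2 * k + 3)) = r := by
        push_cast at this
        rw [sub_eq_zero] at this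
        rw [this, hcast]
      have hmem : ((a i : ℤ) : ZMod (2 * k + 3)) ∈ A.image (fun a => ((a i : ZMod (2 * k + 3)))) :=
        Finset.mem_image_of_mem _ ha
      rw [heq] at hmem
      exact hr hmem
  choose x hx1 hx2 using key
  exact ⟨x, hx1, fun a ha i => hx2 i a ha⟩
end

section
/- Let χ be the minimum of the family (π_z)_{z∈N} where N is a cube of (2k+2)^d vertices in Z^d and π_z is the sum of the 2d conductances incident to z, with i.i.d. conductances of distribution function F and π having distribution function F_π. Then for any a ≥ 0, (2k+2)^d F_π(a) − C(2,(2k+2)^d) F(a)^{4d−1} ≤ P[χ ≤ a] ≤ (2k+2)^d F_π(a), where C(2,m) = m(m−1)/2 is the binomial coefficient. -/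
open MeasureTheory ProbabilityTheory Set Finset

section Aux

/-- Bonferroni inequality in `ℝ≥0∞`, additive form. -/
lemma bonferroni_aux {Ω : Type*} [MeasurableSpace Ω] (μ : Measure Ω) (A : ℕ → Set Ω)
    (hA : ∀ i, MeasurableSet (A i)) (s : Finset ℕ) :
    ∑ i ∈ s, μ (A i) ≤ μ (⋃ i ∈ s, A i)
      + ∑ j ∈ s, ∑ i ∈ s.filter (· < j), μ (A i ∩ A j) := by
  induction s using Finset.induction_on_max with
  | empty => simp
  | insert a s ha ih =>
    have has : a ∉ s := fun h => lt_irrefl a (ha a h)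
    have hU : (⋃ i ∈ insert a s, A i) = A a ∪ ⋃ i ∈ s, A i := by
      simp [Set.biUnion_insert]
    have hfa : ∀ j ∈ s, (insert a s).filter (· < j) = s.filter (· < j) := by
      intro j hj
      rw [Finset.filter_insert, if_neg (by exact fun h => absurd (ha j hj) (not_lt.2 h.le))]
    have hfat : (insert a s).filter (· < a) = s := by
      rw [Finset.filter_insert, if_neg (lt_irrefl a)]
      exact Finset.filter_true_of_mem ha
    have hpairs : ∑ j ∈ insert a s, ∑ i ∈ (insert a s).filter (· < j), μ (A i ∩ A j)
        = ∑ i ∈ s, μ (A i ∩ A a) + ∑ j ∈ s, ∑ i ∈ s.filter (· < j), μ (A i ∩ A j) := by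
      rw [Finset.sum_insert has, hfat]
      congr 1
      exact Finset.sum_congr rfl fun j hj => by rw [hfa j hj]
    rw [Finset.sum_insert has, hU, hpairs]
    have key : μ (A a) + μ (⋃ i ∈ s, A i)
        ≤ μ (A a ∪ ⋃ i ∈ s, A i) + ∑ i ∈ s, μ (A i ∩ A a) := by
      have h1 : μ (A a ∪ ⋃ i ∈ s, A i) + μ (A a ∩ ⋃ i ∈ s, A i)
          = μ (A a) + μ (⋃ i ∈ s, A i) :=
        measure_union_add_inter _ (MeasurableSet.biUnion s.countable_toSet fun i _ => hA i)
      have h2 : μ (A a ∩ ⋃ i ∈ s, A i) ≤ ∑ i ∈ s, μ (A i ∩ A a) := by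
        have : A a ∩ ⋃ i ∈ s, A i = ⋃ i ∈ s, (A i ∩ A a) := by
          rw [Set.inter_iUnion₂]; simp [Set.inter_comm]
        rw [this]
        exact measure_biUnion_finset_le s _
      calc μ (A a) + μ (⋃ i ∈ s, A i) = μ (A a ∪ ⋃ i ∈ s, A i) + μ (A a ∩ ⋃ i ∈ s, A i) :=
            h1.symm
        _ ≤ _ := by exact add_le_add le_rfl h2
    calc μ (A a) + ∑ i ∈ s, μ (A i)
        ≤ μ (A a) + (μ (⋃ i ∈ s, A i) + ∑ j ∈ s, ∑ i ∈ s.filter (· < j), μ (A i ∩ A j)) :=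
          add_le_add le_rfl ih
      _ = (μ (A a) + μ (⋃ i ∈ s, A i)) + ∑ j ∈ s, ∑ i ∈ s.filter (· < j), μ (A i ∩ A j) := by
          ring
      _ ≤ (μ (A a ∪ ⋃ i ∈ s, A i) + ∑ i ∈ s, μ (A i ∩ A a))
            + ∑ j ∈ s, ∑ i ∈ s.filter (· < j), μ (A i ∩ A j) := add_le_add key le_rfl
      _ = μ (A a ∪ ⋃ i ∈ s, A i)
            + (∑ i ∈ s, μ (A i ∩ A a) + ∑ j ∈ s, ∑ i ∈ s.filter (· < j), μ (A i ∩ A j)) := by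
          ring

lemma pairs_card_aux (s : Finset ℕ) :
    ∑ j ∈ s, (s.filter (· < j)).card = s.card.choose 2 := by
  induction s using Finset.induction_on_max with
  | empty => simp
  | insert a s ha ih =>
    have has : a ∉ s := fun h => lt_irrefl a (ha a h)
    have hfa : ∀ j ∈ s, (insert a s).filter (· < j) = s.filter (· < j) := by
      intro j hj
      rw [Finset.filter_insert, if_neg (by exact fun h => absurd (ha j hj) (not_lt.2 h.le))]
    have hfat : (insert a s).filter (· < a) = s := by
      rw [Finset.filter_insert, if_neg (lt_irrefl a)]
      exact Finset.filter_true_of_mem ha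
    have hpairs : ∑ j ∈ insert a s, ((insert a s).filter (· < j)).card
        = s.card + ∑ j ∈ s, (s.filter (· < j)).card := by
      rw [Finset.sum_insert has, hfat]
      congr 1
      exact Finset.sum_congr rfl fun j hj => by rw [hfa j hj]
    rw [hpairs, ih, Finset.card_insert_of_notMem has]
    have : (s.card + 1).choose 2 = s.card + s.card.choose 2 := by
      rw [Nat.choose_succ_succ]
      simp [Nat.choose_one_right]
    omega

/-- The `2d` edges incident to a vertex `z` of `ℤ^d`. -/
def edgeOf {d : ℕ} (z : Fin d → ℤ) (p : Fin d × Bool) : (Fin d → ℤ) × Fin d :=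
  cond p.2 ((fun j => z j - if j = p.1 then 1 else 0), p.1) (z, p.1)

lemma edgeOf_false {d : ℕ} (z : Fin d → ℤ) (i : Fin d) : edgeOf z (i, false) = (z, i) := rfl

lemma edgeOf_true {d : ℕ} (z : Fin d → ℤ) (i : Fin d) :
    edgeOf z (i, true) = ((fun j => z j - if j = i then 1 else 0), i) := rfl

lemma edgeOf_injective {d : ℕ} (z : Fin d → ℤ) : Function.Injective (edgeOf z) := by
  rintro ⟨i, b⟩ ⟨i', b'⟩ h
  cases b <;> cases b' <;>
    simp only [edgeOf_false, edgeOf_true, Prod.mk.injEq] at h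
  · exact Prod.ext h.2 rfl
  · exfalso
    have := congrFun h.1 i'
    simp only [if_pos rfl] at this
    have h2 : z i' = z i' - 1 := this
    omega
  · exfalso
    have := congrFun h.1 i
    simp only [if_pos rfl] at this
    have h2 : z i - 1 = z i := this
    omega
  · exact Prod.ext h.2 rfl

lemma edgeOf_eq_cases {d : ℕ} {z z' : Fin d → ℤ} (hzz : z ≠ z') (p q : Fin d × Bool)
    (h : edgeOf z p = edgeOf z' q) :
    p.1 = q.1 ∧ ((p.2 = false ∧ q.2 = true ∧ ∀ j, z j = z' j - if j = p.1 then 1 else 0)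
      ∨ (p.2 = true ∧ q.2 = false ∧ ∀ j, z j - (if j = p.1 then 1 else 0) = z' j)) := by
  obtain ⟨i, b⟩ := p; obtain ⟨i', b'⟩ := q
  cases b <;> cases b' <;>
    simp only [edgeOf_false, edgeOf_true, Prod.mk.injEq] at h
  · exact absurd h.1 hzz
  · obtain ⟨h1, h2⟩ := h
    subst h2
    exact ⟨rfl, Or.inl ⟨rfl, rfl, fun j => congrFun h1 j⟩⟩
  · obtain ⟨h1, h2⟩ := h
    subst h2
    exact ⟨rfl, Or.inr ⟨rfl, rfl, fun j => congrFun h1 j⟩⟩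
  · exfalso
    obtain ⟨h1, h2⟩ := h
    subst h2
    exact hzz (funext fun j => sub_left_inj.mp (congrFun h1 j))


lemma edgeOf_inter_card_le_one {d : ℕ} (z z' : Fin d → ℤ) (hzz : z ≠ z') :
    ((Finset.univ.image (edgeOf z)) ∩ (Finset.univ.image (edgeOf z'))).card ≤ 1 := by
  rw [Finset.card_le_one]
  intro e he e' he'
  simp only [Finset.mem_inter, Finset.mem_image, Finset.mem_univ, true_and] at he he'
  obtain ⟨⟨p, hp⟩, ⟨q, hq⟩⟩ := he
  obtain ⟨⟨p', hp'⟩, ⟨q', hq'⟩⟩ := he'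
  have K1 := edgeOf_eq_cases hzz p q (hp.trans hq.symm)
  have K2 := edgeOf_eq_cases hzz p' q' (hp'.trans hq'.symm)
  rcases K1.2 with ⟨hb1, hc1, h1⟩ | ⟨hb1, hc1, h1⟩ <;>
    rcases K2.2 with ⟨hb2, hc2, h2⟩ | ⟨hb2, hc2, h2⟩
  · -- both edges of the form (z, ·)
    have hii : p.1 = p'.1 := by
      by_contra hne
      have e1 := h1 p.1
      have e2 := h2 p.1
      rw [if_pos rfl] at e1
      rw [if_neg hne] at e2
      omega
    have hp1 : p = (p.1, false) := Prod.ext rfl hb1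
    have hp2 : p' = (p'.1, false) := Prod.ext rfl hb2
    have E1 : e = (z, p.1) := by rw [← hp, hp1, edgeOf_false]
    have E2 : e' = (z, p'.1) := by rw [← hp', hp2, edgeOf_false]
    rw [E1, E2, hii]
  · exfalso
    have e1 := h1 p.1
    have e2 := h2 p.1
    rw [if_pos rfl] at e1
    rcases eq_or_ne p.1 p'.1 with hc | hc
    · rw [if_pos hc] at e2; omega
    · rw [if_neg hc] at e2; omega
  · exfalso
    have e1 := h1 p'.1
    have e2 := h2 p'.1
    rw [if_pos rfl] at e2
    rcases eq_or_ne p'.1 p.1 with hc | hc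
    · rw [if_pos hc] at e1; omega
    · rw [if_neg hc] at e1; omega
  · -- both edges of the form (z', ·)
    have hii : p.1 = p'.1 := by
      by_contra hne
      have e1 := h1 p.1
      have e2 := h2 p.1
      rw [if_pos rfl] at e1
      rw [if_neg hne] at e2
      omega
    have hq1 : q = (p.1, false) := Prod.ext K1.1.symm hc1
    have hq2 : q' = (p'.1, false) := Prod.ext K2.1.symm hc2
    have E1 : e = (z', p.1) := by rw [← hq, hq1, edgeOf_false]
    have E2 : e' = (z', p'.1) := by rw [← hq', hq2, edgeOf_false]
    rw [E1, E2, hii]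

lemma map_edge_pi {Ω : Type*} [MeasurableSpace Ω] (μ : Measure Ω) [IsProbabilityMeasure μ]
    {d : ℕ} (hd : 0 < d)
    (w : ((Fin d → ℤ) × Fin d) → Ω → ℝ) (hmeas : ∀ e, Measurable (w e))
    (hindep : iIndepFun w μ)
    (ν : Measure ℝ) [SigmaFinite ν] (hmapw : ∀ e, μ.map (w e) = ν)
    (z : Fin d → ℤ) :
    μ.map (fun ω p => w (edgeOf z p) ω) = Measure.pi (fun _ : Fin d × Bool => ν) := by
  haveI : Nonempty (Fin d × Bool) := ⟨(⟨0, hd⟩, false)⟩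
  refine (Measure.pi_eq fun s hs => ?_).symm
  rw [Measure.map_apply (measurable_pi_lambda _ fun p => hmeas _) (MeasurableSet.univ_pi hs)]
  set g := Function.invFun (edgeOf z) with hgdef
  have hg : ∀ p, g (edgeOf z p) = p := Function.leftInverse_invFun (edgeOf_injective z)
  have hpre : (fun ω p => w (edgeOf z p) ω) ⁻¹' Set.pi Set.univ s
      = ⋂ e ∈ Finset.univ.image (edgeOf z), w e ⁻¹' (s (g e)) := by
    ext ω
    simp only [Set.mem_preimage, Set.mem_pi, Set.mem_univ, true_implies, Set.mem_iInter,
      Finset.mem_image, Finset.mem_univ, true_and]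
    constructor
    · rintro h e ⟨p, rfl⟩
      rw [hg p]
      exact h p
    · intro h p
      have := h (edgeOf z p) ⟨p, rfl⟩
      rwa [hg p] at this
  rw [hpre, hindep.meas_biInter (fun e _ => ⟨s (g e), hs _, rfl⟩),
    Finset.prod_image (fun p _ q _ h => edgeOf_injective z h)]
  refine Finset.prod_congr rfl fun p _ => ?_
  rw [hg p, ← hmapw (edgeOf z p), Measure.map_apply (hmeas _) (hs p)]

end Aux

/-- Bounds on the distribution function of `χ = min_{z ∈ N} π_z`, where `N` is the cube
`{1,…,2(k+1)}^d`, `π_z` is the sum of the `2d` conductances incident to `z`, and the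
conductances are i.i.d. with distribution function `F`; `F_π` is the distribution function
of `π`.  For `a ≥ 0`:
`(2k+2)^d F_π(a) − C((2k+2)^d, 2) F(a)^{4d−1} ≤ P[χ ≤ a] ≤ (2k+2)^d F_π(a)`. -/
theorem stmt2 {Ω : Type*} [MeasurableSpace Ω] (μ : Measure Ω) [IsProbabilityMeasure μ]
    (d k : ℕ) (hd : 0 < d)
    (w : ((Fin d → ℤ) × Fin d) → Ω → ℝ)
    (hmeas : ∀ e, Measurable (w e))
    (hpos : ∀ e ω, 0 < w e ω)
    (hindep : iIndepFun w μ)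
    (hident : ∀ e e', IdentDistrib (w e) (w e') μ μ)
    (F Fpi : ℝ → ℝ)
    (hF : ∀ a, F a = (μ {ω | w ((fun _ => 0), ⟨0, hd⟩) ω ≤ a}).toReal)
    (π : (Fin d → ℤ) → Ω → ℝ)
    (hπ : ∀ z ω, π z ω = ∑ i : Fin d,
        (w (z, i) ω + w ((fun j => z j - if j = i then 1 else 0), i) ω))
    (hFpi : ∀ a, Fpi a = (μ {ω | π (fun _ => 0) ω ≤ a}).toReal)
    (χ : Ω → ℝ)
    (hχ : ∀ ω, χ ω = sInf {r | ∃ z : Fin d → ℤ,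
        (∀ i, 1 ≤ z i ∧ z i ≤ 2 * ((k : ℤ) + 1)) ∧ r = π z ω}) :
    ∀ a : ℝ, 0 ≤ a →
      ((2 * (k + 1) : ℝ) ^ d * Fpi a
          - (Nat.choose ((2 * (k + 1)) ^ d) 2 : ℝ) * F a ^ (4 * d - 1)
        ≤ (μ {ω | χ ω ≤ a}).toReal) ∧
      (μ {ω | χ ω ≤ a}).toReal ≤ (2 * (k + 1) : ℝ) ^ d * Fpi a := by
  intro a ha
  -- basic setup
  set e₀ : (Fin d → ℤ) × Fin d := ((fun _ => 0), ⟨0, hd⟩) with he₀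
  set ν : Measure ℝ := μ.map (w e₀) with hν
  haveI : IsProbabilityMeasure ν := Measure.isProbabilityMeasure_map (hmeas e₀).aemeasurable
  have hmapw : ∀ e, μ.map (w e) = ν := fun e => (hident e e₀).map_eq
  have hπmeas : ∀ z, Measurable (π z) := by
    intro z
    have hz : π z = fun ω => ∑ i : Fin d,
        (w (z, i) ω + w ((fun j => z j - if j = i then 1 else 0), i) ω) := funext (hπ z)
    rw [hz]
    exact Finset.measurable_sum _ fun i _ => (hmeas _).add (hmeas _)
  have hAmeas : ∀ z : Fin d → ℤ, MeasurableSet {ω | π z ω ≤ a} :=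
    fun z => measurableSet_le (hπmeas z) measurable_const
  have hsum : ∀ (z : Fin d → ℤ) ω, π z ω = ∑ p : Fin d × Bool, w (edgeOf z p) ω := by
    intro z ω
    rw [hπ, Fintype.sum_prod_type]
    exact Finset.sum_congr rfl fun i _ => by
      rw [Fintype.sum_bool, edgeOf_true, edgeOf_false, add_comm]
  -- identical laws of the π z
  have hlaw : ∀ z : Fin d → ℤ, μ {ω | π z ω ≤ a} = ENNReal.ofReal (Fpi a) := by
    have hS : MeasurableSet {v : Fin d × Bool → ℝ | (∑ p, v p) ≤ a} :=
      measurableSet_le (Finset.measurable_sum _ fun p _ => measurable_pi_apply p)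
        measurable_const
    have hgood : ∀ y : Fin d → ℤ, μ {ω | π y ω ≤ a}
        = (Measure.pi fun _ : Fin d × Bool => ν) {v | (∑ p, v p) ≤ a} := by
      intro y
      have hset : {ω | π y ω ≤ a}
          = (fun ω (p : Fin d × Bool) => w (edgeOf y p) ω) ⁻¹' {v | (∑ p, v p) ≤ a} := by
        ext ω
        simp only [Set.mem_setOf_eq, Set.mem_preimage]
        rw [hsum y ω]
      rw [hset, ← Measure.map_apply (measurable_pi_lambda _ fun p => hmeas _) hS,
        map_edge_pi μ hd w hmeas hindep ν hmapw y]
    intro z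
    rw [hgood z, ← hgood (fun _ => 0), hFpi, ENNReal.ofReal_toReal (measure_ne_top μ _)]
  -- single-edge law and bounds on F a
  have hwa : ∀ e, μ (w e ⁻¹' Set.Iic a) = ENNReal.ofReal (F a) := by
    intro e
    have h1 : μ (w e ⁻¹' Set.Iic a) = ν (Set.Iic a) := by
      rw [← hmapw e, Measure.map_apply (hmeas e) measurableSet_Iic]
    have h2 : μ (w e₀ ⁻¹' Set.Iic a) = ν (Set.Iic a) := by
      rw [← hmapw e₀, Measure.map_apply (hmeas e₀) measurableSet_Iic]
    have h3 : {ω | w e₀ ω ≤ a} = w e₀ ⁻¹' Set.Iic a := rfl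
    rw [h1, ← h2, hF, h3, ENNReal.ofReal_toReal (measure_ne_top μ _)]
  have hFa0 : 0 ≤ F a := by rw [hF]; exact ENNReal.toReal_nonneg
  have hFa1 : F a ≤ 1 := by
    rw [hF]
    have h1 : μ {ω | w e₀ ω ≤ a} ≤ 1 := prob_le_one
    have h2 := ENNReal.toReal_mono ENNReal.one_ne_top h1
    simpa using h2
  -- each π z ≤ a forces all incident edges ≤ a
  have hsub : ∀ (z : Fin d → ℤ) ω, π z ω ≤ a → ∀ p, w (edgeOf z p) ω ≤ a := by
    intro z ω hle p
    have h1 : w (edgeOf z p) ω ≤ ∑ q : Fin d × Bool, w (edgeOf z q) ω :=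
      Finset.single_le_sum (fun q _ => (hpos _ ω).le) (Finset.mem_univ p)
    rw [← hsum z ω] at h1
    linarith
  -- pair bound
  have hpair : ∀ z z' : Fin d → ℤ, z ≠ z' →
      μ ({ω | π z ω ≤ a} ∩ {ω | π z' ω ≤ a}) ≤ ENNReal.ofReal (F a ^ (4 * d - 1)) := by
    intro z z' hzz
    set U := (Finset.univ.image (edgeOf z)) ∪ (Finset.univ.image (edgeOf z')) with hU
    have hcard : 4 * d - 1 ≤ U.card := by
      have h1 : (Finset.univ.image (edgeOf z)).card = 2 * d := by
        rw [Finset.card_image_of_injective _ (edgeOf_injective z), Finset.card_univ,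
          Fintype.card_prod, Fintype.card_fin, Fintype.card_bool]
        ring
      have h2 : (Finset.univ.image (edgeOf z')).card = 2 * d := by
        rw [Finset.card_image_of_injective _ (edgeOf_injective z'), Finset.card_univ,
          Fintype.card_prod, Fintype.card_fin, Fintype.card_bool]
        ring
      have hiu := Finset.card_union_add_card_inter
        (Finset.univ.image (edgeOf z)) (Finset.univ.image (edgeOf z'))
      rw [← hU] at hiu
      have hint := edgeOf_inter_card_le_one z z' hzz
      omega
    have hsubU : {ω | π z ω ≤ a} ∩ {ω | π z' ω ≤ a} ⊆ ⋂ e ∈ U, w e ⁻¹' Set.Iic a := by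
      rintro ω ⟨h1, h2⟩
      simp only [Set.mem_iInter, Set.mem_preimage, Set.mem_Iic]
      intro e he
      rw [hU, Finset.mem_union] at he
      rcases he with he | he
      · obtain ⟨p, -, rfl⟩ := Finset.mem_image.mp he
        exact hsub z ω h1 p
      · obtain ⟨p, -, rfl⟩ := Finset.mem_image.mp he
        exact hsub z' ω h2 p
    calc μ ({ω | π z ω ≤ a} ∩ {ω | π z' ω ≤ a}) ≤ μ (⋂ e ∈ U, w e ⁻¹' Set.Iic a) :=
          measure_mono hsubU
      _ = ∏ e ∈ U, μ (w e ⁻¹' Set.Iic a) :=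
          hindep.meas_biInter (fun e _ => ⟨Set.Iic a, measurableSet_Iic, rfl⟩)
      _ = ENNReal.ofReal (F a) ^ U.card := by
          rw [Finset.prod_congr rfl fun e _ => hwa e, Finset.prod_const]
      _ = ENNReal.ofReal (F a ^ U.card) := by rw [ENNReal.ofReal_pow hFa0]
      _ ≤ ENNReal.ofReal (F a ^ (4 * d - 1)) :=
          ENNReal.ofReal_le_ofReal (pow_le_pow_of_le_one hFa0 hFa1 hcard)
  -- the cube as a finset
  set NS : Finset (Fin d → ℤ) :=
    Fintype.piFinset (fun _ : Fin d => Finset.Icc (1 : ℤ) (2 * ((k : ℤ) + 1))) with hNS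
  have hNSmem : ∀ z : Fin d → ℤ,
      z ∈ NS ↔ ∀ i, 1 ≤ z i ∧ z i ≤ 2 * ((k : ℤ) + 1) := by
    intro z
    rw [hNS, Fintype.mem_piFinset]
    simp only [Finset.mem_Icc]
  have hNSne : NS.Nonempty := by
    refine ⟨fun _ => 1, (hNSmem _).mpr fun i => ⟨le_refl _, ?_⟩⟩
    omega
  have hNScard : NS.card = (2 * (k + 1)) ^ d := by
    rw [hNS, Fintype.card_piFinset]
    have : ∀ i : Fin d, (Finset.Icc (1 : ℤ) (2 * ((k : ℤ) + 1))).card = 2 * (k + 1) := by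
      intro i
      rw [Int.card_Icc]
      omega
    rw [Finset.prod_congr rfl fun i _ => this i, Finset.prod_const, Finset.card_univ,
      Fintype.card_fin]
  -- the event {χ ≤ a} as a finite union
  have hχset : {ω | χ ω ≤ a} = ⋃ z ∈ NS, {ω | π z ω ≤ a} := by
    ext ω
    simp only [Set.mem_setOf_eq, Set.mem_iUnion, exists_prop]
    rw [hχ ω]
    have hTeq : {r | ∃ z : Fin d → ℤ,
        (∀ i, 1 ≤ z i ∧ z i ≤ 2 * ((k : ℤ) + 1)) ∧ r = π z ω}
        = ↑(NS.image fun z => π z ω) := by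
      ext r
      simp only [Set.mem_setOf_eq, Finset.coe_image, Set.mem_image, Finset.mem_coe]
      constructor
      · rintro ⟨z, hz, rfl⟩
        exact ⟨z, (hNSmem z).mpr hz, rfl⟩
      · rintro ⟨z, hz, rfl⟩
        exact ⟨z, (hNSmem z).mp hz, rfl⟩
    rw [hTeq]
    have hne : (NS.image fun z => π z ω).Nonempty := hNSne.image _
    rw [Finset.Nonempty.csInf_eq_min' hne]
    constructor
    · intro h
      have hmem := Finset.min'_mem (NS.image fun z => π z ω) hne
      obtain ⟨z, hz, hzeq⟩ := Finset.mem_image.mp hmem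
      exact ⟨z, hz, by rw [hzeq]; exact h⟩
    · rintro ⟨z, hz, hza⟩
      exact le_trans (Finset.min'_le _ _ (Finset.mem_image_of_mem _ hz)) hza
  -- transfer to an ℕ-indexed family
  obtain ⟨f, hf⟩ := Countable.exists_injective_nat (Fin d → ℤ)
  set g : ℕ → (Fin d → ℤ) := Function.invFun f with hg
  have hgf : ∀ z, g (f z) = z := Function.leftInverse_invFun hf
  set A : ℕ → Set Ω := fun n => {ω | π (g n) ω ≤ a} with hA
  set s : Finset ℕ := NS.image f with hs
  have hUnion : (⋃ n ∈ s, A n) = {ω | χ ω ≤ a} := by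
    rw [hχset, hs]
    ext ω
    simp only [Set.mem_iUnion, exists_prop, Finset.mem_image]
    constructor
    · rintro ⟨n, ⟨z, hz, rfl⟩, hn⟩
      refine ⟨z, hz, ?_⟩
      simpa [hA, hgf z] using hn
    · rintro ⟨z, hz, hωz⟩
      exact ⟨f z, ⟨z, hz, rfl⟩, by simpa [hA, hgf z] using hωz⟩
  have hsum_s : ∑ n ∈ s, μ (A n) = NS.card • ENNReal.ofReal (Fpi a) := by
    rw [hs, Finset.sum_image (fun z _ z' _ h => hf h)]
    have hterm : ∀ z ∈ NS, μ (A (f z)) = ENNReal.ofReal (Fpi a) := by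
      intro z _
      have : A (f z) = {ω | π z ω ≤ a} := by simp [hA, hgf z]
      rw [this]
      exact hlaw z
    rw [Finset.sum_congr rfl hterm, Finset.sum_const]
  have hscard : s.card = NS.card := Finset.card_image_of_injective _ hf
  have hpairs_le : ∑ j ∈ s, ∑ i ∈ s.filter (· < j), μ (A i ∩ A j)
      ≤ (NS.card.choose 2) • ENNReal.ofReal (F a ^ (4 * d - 1)) := by
    have hterm : ∀ j ∈ s, ∀ i ∈ s.filter (· < j),
        μ (A i ∩ A j) ≤ ENNReal.ofReal (F a ^ (4 * d - 1)) := by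
      intro j hj i hi
      rw [Finset.mem_filter] at hi
      obtain ⟨zj, hzj, rfl⟩ := Finset.mem_image.mp hj
      obtain ⟨zi, hzi, rfl⟩ := Finset.mem_image.mp hi.1
      have hne : zi ≠ zj := fun h => absurd (congrArg f h) (by
        intro hh
        exact absurd hh (by exact fun hh' => (lt_irrefl _ (hh' ▸ hi.2)).elim))
      rw [hA]
      simp only [hgf]
      exact hpair zi zj hne
    calc ∑ j ∈ s, ∑ i ∈ s.filter (· < j), μ (A i ∩ A j)
        ≤ ∑ j ∈ s, ∑ i ∈ s.filter (· < j), ENNReal.ofReal (F a ^ (4 * d - 1)) :=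
          Finset.sum_le_sum fun j hj => Finset.sum_le_sum fun i hi => hterm j hj i hi
      _ = ∑ j ∈ s, (s.filter (· < j)).card • ENNReal.ofReal (F a ^ (4 * d - 1)) := by
          simp [Finset.sum_const]
      _ = (∑ j ∈ s, (s.filter (· < j)).card) • ENNReal.ofReal (F a ^ (4 * d - 1)) := by
          rw [← Finset.sum_smul]
      _ = (NS.card.choose 2) • ENNReal.ofReal (F a ^ (4 * d - 1)) := by
          rw [pairs_card_aux, hscard]
  -- Bonferroni and union bound in ℝ≥0∞
  have hbon := bonferroni_aux μ A (fun n => measurableSet_le (hπmeas _) measurable_const) s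
  rw [hUnion, hsum_s] at hbon
  have hlow : NS.card • ENNReal.ofReal (Fpi a)
      ≤ μ {ω | χ ω ≤ a} + (NS.card.choose 2) • ENNReal.ofReal (F a ^ (4 * d - 1)) :=
    le_trans hbon (add_le_add le_rfl hpairs_le)
  have hup : μ {ω | χ ω ≤ a} ≤ NS.card • ENNReal.ofReal (Fpi a) := by
    rw [hχset]
    calc μ (⋃ z ∈ NS, {ω | π z ω ≤ a}) ≤ ∑ z ∈ NS, μ {ω | π z ω ≤ a} :=
          measure_biUnion_finset_le NS _
      _ = NS.card • ENNReal.ofReal (Fpi a) := by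
          rw [Finset.sum_congr rfl fun z _ => hlaw z, Finset.sum_const]
  -- pass to real numbers
  have hFpi0 : 0 ≤ Fpi a := by rw [hFpi]; exact ENNReal.toReal_nonneg
  have hF40 : 0 ≤ F a ^ (4 * d - 1) := pow_nonneg hFa0 _
  have hsm : (NS.card • ENNReal.ofReal (Fpi a)).toReal = (NS.card : ℝ) * Fpi a := by
    rw [nsmul_eq_mul, ENNReal.toReal_mul, ENNReal.toReal_natCast,
      ENNReal.toReal_ofReal hFpi0]
  have hsm2 : ((NS.card.choose 2) • ENNReal.ofReal (F a ^ (4 * d - 1))).toReal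
      = (NS.card.choose 2 : ℝ) * F a ^ (4 * d - 1) := by
    rw [nsmul_eq_mul, ENNReal.toReal_mul, ENNReal.toReal_natCast,
      ENNReal.toReal_ofReal hF40]
  have hcast : ((2 * (k + 1) : ℝ)) ^ d = (NS.card : ℝ) := by
    rw [hNScard]
    push_cast
    ring
  constructor
  · -- lower bound
    have htr := ENNReal.toReal_mono (a := NS.card • ENNReal.ofReal (Fpi a))
      (by
        refine ENNReal.add_ne_top.mpr ⟨measure_ne_top μ _, ?_⟩
        rw [nsmul_eq_mul]
        exact ENNReal.mul_ne_top (ENNReal.natCast_ne_top _) ENNReal.ofReal_ne_top)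
      hlow
    rw [ENNReal.toReal_add (measure_ne_top μ _)
        (by rw [nsmul_eq_mul]
            exact ENNReal.mul_ne_top (ENNReal.natCast_ne_top _) ENNReal.ofReal_ne_top),
      hsm, hsm2] at htr
    rw [hcast, show ((2 * (k + 1)) ^ d).choose 2 = NS.card.choose 2 from by rw [hNScard]]
    linarith
  · -- upper bound
    have htr := ENNReal.toReal_mono (a := μ {ω | χ ω ≤ a})
      (by
        rw [nsmul_eq_mul]
        exact ENNReal.mul_ne_top (ENNReal.natCast_ne_top _) ENNReal.ofReal_ne_top)
      hup
    rw [hsm] at htr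
    rw [hcast]
    exact htr
end

section
/- Deterministic path/energy comparison: Let G=(V,E) be a subgraph of the nearest-neighbor lattice (Z^d, E_d) with d ≥ 2 and edge weights w_e > 0, and let C=(V_C, E_C) be a subgraph of G. Assume (i) there is μ > 0 with E^w_C(f) ≥ μ Σ_{x∈V_C} f(x)^2 for all f: V → ℝ supported in a set B ⊆ V, and (ii) there is an injective map φ: B∖V_C → V_C and, for each x ∈ B∖V_C, a self-avoiding directed path l(x,φ(x)) in G from x to φ(x) of length at most L ≥ 2 using only edges e with w_e > ν > 0. Then for all f supported in B: E^w_G(f) ≥ ((2L)^{d+1}/ν + 3/μ)^{-1} Σ_{x∈V} f(x)^2. -/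
open Finset

private noncomputable def Fb : ℕ → ℕ → ℕ
  | 0, _ => 1
  | (n+1), r => ∑ j ∈ Finset.Icc (-(r:ℤ)) (r:ℤ), Fb n (r - j.natAbs)

private lemma Fb_one (r : ℕ) : Fb 1 r = 2*r+1 := by
  simp only [Fb]
  rw [Finset.sum_const, Int.card_Icc]
  simp; omega

private lemma Fb_two (r : ℕ) : Fb 2 r ≤ 2*(r+1)^2 := by
  induction r with
  | zero => simp [Fb, Fb_one]
  | succ r ih =>
    have hsplit : Finset.Icc (-(r+1:ℤ)) (r+1) =
        insert (-(r+1:ℤ)) (insert ((r:ℤ)+1) (Finset.Icc (-(r:ℤ)) r)) := by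
      ext j; simp [Finset.mem_Icc, Finset.mem_insert]; omega
    have h1 : (-(r+1:ℤ)) ∉ insert ((r:ℤ)+1) (Finset.Icc (-(r:ℤ)) r) := by
      simp [Finset.mem_Icc]; omega
    have h2 : ((r:ℤ)+1) ∉ Finset.Icc (-(r:ℤ)) r := by simp
    have key : Fb 2 (r+1) = Fb 1 0 + Fb 1 0 + ∑ j ∈ Finset.Icc (-(r:ℤ)) r, Fb 1 (r + 1 - j.natAbs) := by
      show (∑ j ∈ Finset.Icc (-(r+1:ℤ)) (r+1), Fb 1 (r + 1 - j.natAbs)) = _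
      rw [hsplit, Finset.sum_insert h1, Finset.sum_insert h2]
      have e1 : ((-(r+1:ℤ)).natAbs) = r + 1 := by omega
      have e2 : (((r:ℤ)+1).natAbs) = r + 1 := by omega
      rw [e1, e2]
      simp; ring
    have hterm : ∀ j ∈ Finset.Icc (-(r:ℤ)) r, Fb 1 (r + 1 - j.natAbs) = Fb 1 (r - j.natAbs) + 2 := by
      intro j hj
      simp only [Finset.mem_Icc] at hj
      rw [Fb_one, Fb_one]; omega
    have hFb2 : Fb 2 r = ∑ j ∈ Finset.Icc (-(r:ℤ)) r, Fb 1 (r - j.natAbs) := rfl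
    rw [key, Finset.sum_congr rfl hterm, Finset.sum_add_distrib, Finset.sum_const, Int.card_Icc,
      ← hFb2]
    have hc : ((r:ℤ) + 1 - -(r:ℤ)).toNat = 2*r+1 := by omega
    rw [hc, smul_eq_mul, Fb_one]
    nlinarith [ih]

private lemma Fb_le (n : ℕ) : ∀ r : ℕ, Fb (n+2) r ≤ 2^(n+1) * (r+1)^(n+2) := by
  induction n with
  | zero => intro r; simpa using Fb_two r
  | succ n ih =>
    intro r
    have hdef : Fb (n+3) r = ∑ j ∈ Finset.Icc (-(r:ℤ)) r, Fb (n+2) (r - j.natAbs) := rfl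
    rw [hdef]
    calc ∑ j ∈ Finset.Icc (-(r:ℤ)) r, Fb (n+2) (r - j.natAbs)
        ≤ ∑ _j ∈ Finset.Icc (-(r:ℤ)) r, 2^(n+1) * (r+1)^(n+2) := by
          refine Finset.sum_le_sum fun j _ => ?_
          refine (ih _).trans ?_
          have h : r - j.natAbs + 1 ≤ r + 1 := by omega
          exact Nat.mul_le_mul_left _ (Nat.pow_le_pow_left h _)
      _ = (2*r+1) * (2^(n+1) * (r+1)^(n+2)) := by
          rw [Finset.sum_const, Int.card_Icc]
          have hc : ((r:ℤ) + 1 - -(r:ℤ)).toNat = 2*r+1 := by omega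
          rw [hc]; simp [mul_comm]
      _ ≤ (2*(r+1)) * (2^(n+1) * (r+1)^(n+2)) := by
          exact Nat.mul_le_mul_right _ (by omega)
      _ = 2^(n+2) * (r+1)^(n+3) := by ring

private lemma card_le_Fb : ∀ (n r : ℕ) (a : Fin n → ℤ) (S : Finset (Fin n → ℤ)),
    (∀ z ∈ S, (∑ i, (z i - a i).natAbs) ≤ r) → S.card ≤ Fb n r := by
  intro n
  induction n with
  | zero =>
    intro r a S _
    refine (Finset.card_le_one.mpr (fun u _ v _ => ?_)).trans ?_
    · funext i; exact i.elim0
    · simp [Fb]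
  | succ n ih =>
    intro r a S hS
    classical
    have hmem : ∀ z ∈ S, z 0 - a 0 ∈ Finset.Icc (-(r:ℤ)) r := by
      intro z hz
      have h1 : (z 0 - a 0).natAbs ≤ ∑ i, (z i - a i).natAbs :=
        Finset.single_le_sum (f := fun i : Fin (n+1) => (z i - a i).natAbs)
          (fun i _ => Nat.zero_le _) (Finset.mem_univ 0)
      have h2 := hS z hz
      simp only [Finset.mem_Icc]; omega
    rw [Finset.card_eq_sum_card_fiberwise hmem]
    show ∑ j ∈ Finset.Icc (-(r:ℤ)) r, (S.filter (fun z => z 0 - a 0 = j)).card ≤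
      ∑ j ∈ Finset.Icc (-(r:ℤ)) r, Fb n (r - j.natAbs)
    refine Finset.sum_le_sum fun j hj => ?_
    set T := S.filter (fun z => z 0 - a 0 = j) with hT
    have hTmem : ∀ z ∈ T, z ∈ S ∧ z 0 - a 0 = j := by
      intro z hz; rw [hT, Finset.mem_filter] at hz; exact hz
    have hinj : Set.InjOn (fun z : Fin (n+1) → ℤ => fun i : Fin n => z i.succ) T := by
      intro u hu v hv huv
      have hu' := hTmem u hu
      have hv' := hTmem v hv
      funext i
      refine Fin.cases ?_ ?_ i
      · have := hu'.2; have := hv'.2; omega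
      · intro k; exact congrFun huv k
    rw [← Finset.card_image_of_injOn hinj]
    refine ih (r - j.natAbs) (fun i => a i.succ) _ ?_
    intro y hy
    obtain ⟨z, hz, rfl⟩ := Finset.mem_image.mp hy
    obtain ⟨hzS, hzj⟩ := hTmem z hz
    have htot := hS z hzS
    have hsplit : ∑ i : Fin (n+1), (z i - a i).natAbs
        = (z 0 - a 0).natAbs + ∑ i : Fin n, (z i.succ - a i.succ).natAbs :=
      Fin.sum_univ_succ _
    have : (z 0 - a 0).natAbs = j.natAbs := by rw [hzj]
    simp only []
    omega

private lemma ball_card (d L : ℕ) (hd : 2 ≤ d) (hL : 2 ≤ L) (a : Fin d → ℤ)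
    (S : Finset (Fin d → ℤ)) (hS : ∀ z ∈ S, (∑ i, (z i - a i).natAbs) ≤ L - 1) :
    S.card ≤ 2^(d-1) * L^d := by
  have h1 := card_le_Fb d (L-1) a S hS
  obtain ⟨e, rfl⟩ : ∃ e, d = e + 2 := ⟨d - 2, by omega⟩
  have h2 := Fb_le e (L-1)
  have h3 : L - 1 + 1 = L := by omega
  rw [h3] at h2
  have h4 : e + 2 - 1 = e + 1 := by omega
  rw [h4]
  exact h1.trans h2

private lemma telescope_sq {α : Type*} (f : α → ℝ) (l : List α) (x y : α)
    (hx : l.head? = some x) (hy : l.getLast? = some y) :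
    (f x - f y)^2 ≤ ((l.length - 1 : ℕ) : ℝ) *
      ∑ i ∈ Finset.range (l.length - 1), (f (l.getD i y) - f (l.getD (i+1) y))^2 := by
  have hne : l ≠ [] := by intro h; rw [h] at hx; simp at hx
  have h0 : l.getD 0 y = x := by
    cases l with
    | nil => simp at hx
    | cons a t => simp at hx ⊢; exact hx
  have hlast : l.getD (l.length - 1) y = y := by
    have h1 : l.getLast hne = y := by
      rw [List.getLast?_eq_getLast hne] at hy; injection hy
    have h2 : l.length - 1 < l.length := by
      have := List.length_pos_iff.mpr hne; omega
    rw [List.getD_eq_getElem l y h2, ← h1, List.getLast_eq_getElem]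
  set g : ℕ → ℝ := fun i => f (l.getD i y) with hg
  have key : f x - f y = ∑ i ∈ Finset.range (l.length - 1), (g i - g (i+1)) := by
    rw [Finset.sum_range_sub' g (l.length - 1)]
    simp only [hg, h0, hlast]
  calc (f x - f y)^2 = (∑ i ∈ Finset.range (l.length - 1), (g i - g (i+1)))^2 := by rw [key]
    _ ≤ (Finset.range (l.length - 1)).card * ∑ i ∈ Finset.range (l.length - 1), (g i - g (i+1))^2 :=
        sq_sum_le_card_mul_sum_sq
    _ = ((l.length - 1 : ℕ) : ℝ) * ∑ i ∈ Finset.range (l.length - 1), (g i - g (i+1))^2 := by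
        rw [Finset.card_range]

private lemma dist_along {d : ℕ} (EG : Finset ((Fin d → ℤ) × (Fin d → ℤ)))
    (hlattice : ∀ p ∈ EG, (∑ i, (p.1 i - p.2 i).natAbs) = 1)
    (R : (Fin d → ℤ) → (Fin d → ℤ) → Prop) (hR : ∀ a b, R a b → (a,b) ∈ EG)
    (l : List (Fin d → ℤ)) (x : Fin d → ℤ) (hx : l.head? = some x)
    (hch : l.Chain' R) :
    ∀ i (h : i < l.length), (∑ k, (x k - l.get ⟨i, h⟩ k).natAbs) ≤ i := by
  intro i
  induction i with
  | zero =>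
    intro h
    have : l.get ⟨0, h⟩ = x := by
      cases l with
      | nil => simp at h
      | cons a t => simp at hx ⊢; exact hx
    rw [this]; simp
  | succ i ih =>
    intro h
    have hi : i < l.length := by omega
    have hstep := List.isChain_iff_getElem.mp hch i (by omega)
    have hedge := hlattice _ (hR _ _ hstep)
    have hprev := ih hi
    have htri : (∑ k, (x k - l.get ⟨i+1, h⟩ k).natAbs)
        ≤ (∑ k, (x k - l.get ⟨i, hi⟩ k).natAbs)
          + ∑ k, (l.get ⟨i, hi⟩ k - l.get ⟨i+1, h⟩ k).natAbs := by
      rw [← Finset.sum_add_distrib]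
      exact Finset.sum_le_sum fun k _ => by omega
    have hedge' : (∑ k, (l.get ⟨i, hi⟩ k - l.get ⟨i+1, h⟩ k).natAbs) = 1 := hedge
    omega

/-- Deterministic path/energy comparison (Lemma on path arguments).
Let `G = (V, EG)` be a finite subgraph of the nearest-neighbor lattice `(ℤ^d, 𝔈_d)`,
`d ≥ 2`, with positive symmetric edge weights `w`, and let `C = (VC, EC)` be a subgraph
of `G`.  Assume the Poincaré-type inequality `E^w_C(f) ≥ μ ∑_{x ∈ VC} f(x)²` for all `f`
supported in `B ⊆ V`, and that there is an injective map `φ : B ∖ VC → VC` together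
with, for each `x ∈ B ∖ VC`, a self-avoiding directed path in `G` from `x` to `φ(x)`
of length at most `L ≥ 2` using only edges of weight `> ν`.  Then for every `f`
supported in `B`:
`E^w_G(f) ≥ ((2L)^{d+1}/ν + 3/μ)⁻¹ ∑_{x ∈ V} f(x)²`. -/
theorem stmt6 (d L : ℕ) (hd : 2 ≤ d) (hL : 2 ≤ L)
    (ν μc : ℝ) (hν : 0 < ν) (hμ : 0 < μc)
    (V VC B : Finset (Fin d → ℤ))
    (EG EC : Finset ((Fin d → ℤ) × (Fin d → ℤ)))
    (w : (Fin d → ℤ) × (Fin d → ℤ) → ℝ)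
    (hVC : VC ⊆ V) (hB : B ⊆ V)
    (hECG : EC ⊆ EG)
    (hEGV : ∀ p ∈ EG, p.1 ∈ V ∧ p.2 ∈ V)
    (hECV : ∀ p ∈ EC, p.1 ∈ VC ∧ p.2 ∈ VC)
    (hsymG : ∀ p, p ∈ EG ↔ Prod.swap p ∈ EG)
    (hsymC : ∀ p, p ∈ EC ↔ Prod.swap p ∈ EC)
    (hlattice : ∀ p ∈ EG, (∑ i, (p.1 i - p.2 i).natAbs) = 1)
    (hwpos : ∀ p, 0 < w p) (hwsym : ∀ p, w (Prod.swap p) = w p)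
    (φ : (Fin d → ℤ) → (Fin d → ℤ))
    (hφinj : Set.InjOn φ ↑(B \ VC))
    (hφrange : ∀ x ∈ B \ VC, φ x ∈ VC)
    (hpath : ∀ x ∈ B \ VC, ∃ l : List (Fin d → ℤ),
      l.head? = some x ∧ l.getLast? = some (φ x) ∧ l.Nodup ∧ l.length ≤ L + 1 ∧
      l.Chain' (fun a b => (a, b) ∈ EG ∧ ν < w (a, b)))
    (hPoincare : ∀ f : (Fin d → ℤ) → ℝ, (∀ x ∉ B, f x = 0) →
      μc * ∑ x ∈ VC, f x ^ 2 ≤ (1 / 2) * ∑ p ∈ EC, w p * (f p.1 - f p.2) ^ 2) :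
    ∀ f : (Fin d → ℤ) → ℝ, (∀ x ∉ B, f x = 0) →
      ((2 * (L : ℝ)) ^ (d + 1) / ν + 3 / μc)⁻¹ * ∑ x ∈ V, f x ^ 2
        ≤ (1 / 2) * ∑ p ∈ EG, w p * (f p.1 - f p.2) ^ 2 := by
  intro f hf
  classical
  -- choose paths
  have hpath' : ∀ x : Fin d → ℤ, ∃ lx : List (Fin d → ℤ), x ∈ B \ VC →
      (lx.head? = some x ∧ lx.getLast? = some (φ x) ∧ lx.Nodup ∧ lx.length ≤ L + 1 ∧
       lx.Chain' fun a b => (a, b) ∈ EG ∧ ν < w (a, b)) := by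
    intro x
    by_cases h : x ∈ B \ VC
    · obtain ⟨lx, h1, h2, h3, h4, h5⟩ := hpath x h
      exact ⟨lx, fun _ => ⟨h1, h2, h3, h4, h5⟩⟩
    · exact ⟨[], fun h' => absurd h' h⟩
  choose l hl using hpath'
  set g : (Fin d → ℤ) × (Fin d → ℤ) → ℝ := fun p => w p * (f p.1 - f p.2) ^ 2 with hgdef
  have hg0 : ∀ p, 0 ≤ g p := fun p => mul_nonneg (hwpos p).le (sq_nonneg _)
  set T : ℝ := ∑ p ∈ EG, g p with hTdef
  have hT0 : 0 ≤ T := Finset.sum_nonneg fun p _ => hg0 p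
  set A : ℝ := ∑ x ∈ VC, f x ^ 2 with hAdef
  have hA0 : 0 ≤ A := Finset.sum_nonneg fun _ _ => sq_nonneg _
  have hAT : μc * A ≤ (1/2) * T := by
    refine (hPoincare f hf).trans ?_
    have hle : ∑ p ∈ EC, g p ≤ T :=
      Finset.sum_le_sum_of_subset_of_nonneg hECG fun p _ _ => hg0 p
    have : (∑ p ∈ EC, w p * (f p.1 - f p.2) ^ 2) = ∑ p ∈ EC, g p := rfl
    rw [this]
    linarith
  -- the finset of directed edges along the path of x
  set P : (Fin d → ℤ) → Finset ((Fin d → ℤ) × (Fin d → ℤ)) := fun x =>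
    (Finset.range ((l x).length - 1)).image
      (fun i => ((l x).getD i (φ x), (l x).getD (i+1) (φ x))) with hPdef
  set M : ℕ := 2^(d-1) * L^d with hMdef
  -- per-vertex estimate
  have hper : ∀ x ∈ B \ VC,
      f x ^ 2 ≤ 2 * f (φ x) ^ 2 + (2 * L / ν) * ∑ p ∈ P x, g p := by
    intro x hx
    obtain ⟨h1, h2, h3, h4, h5⟩ := hl x hx
    set n := (l x).length with hn
    have hne : l x ≠ [] := by intro h; rw [h] at h1; simp at h1
    have hn1 : 1 ≤ n := by
      rw [hn]; exact List.length_pos_iff.mpr hne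
    set S : ℝ := ∑ i ∈ Finset.range (n - 1),
      (f ((l x).getD i (φ x)) - f ((l x).getD (i+1) (φ x)))^2 with hSdef
    have hS0 : 0 ≤ S := Finset.sum_nonneg fun _ _ => sq_nonneg _
    have step1 : (f x - f (φ x))^2 ≤ ((n - 1 : ℕ) : ℝ) * S :=
      telescope_sq f (l x) x (φ x) h1 h2
    have step2 : S ≤ ν⁻¹ * ∑ p ∈ P x, g p := by
      have himg : ∑ p ∈ P x, g p = ∑ i ∈ Finset.range (n - 1),
          g ((l x).getD i (φ x), (l x).getD (i+1) (φ x)) := by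
        rw [hPdef]
        refine Finset.sum_image ?_
        intro i hi j hj hij
        simp only [Finset.mem_coe, Finset.mem_range] at hi hj
        have hi' : i < n := by omega
        have hj' : j < n := by omega
        have e1 : (l x).getD i (φ x) = (l x).get ⟨i, hi'⟩ := List.getD_eq_getElem _ _ _
        have e2 : (l x).getD j (φ x) = (l x).get ⟨j, hj'⟩ := List.getD_eq_getElem _ _ _
        have : (l x).get ⟨i, hi'⟩ = (l x).get ⟨j, hj'⟩ := by
          rw [← e1, ← e2]; exact congrArg Prod.fst hij
        have := (h3.get_inj_iff).mp this
        exact Fin.mk.injEq .. ▸ (by injection this)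
      rw [himg, Finset.mul_sum]
      refine Finset.sum_le_sum fun i hi => ?_
      simp only [Finset.mem_range] at hi
      have hi1 : i + 1 < n := by omega
      have hi0 : i < n := by omega
      have hstep := List.isChain_iff_getElem.mp h5 i (by omega)
      have e1 : (l x).getD i (φ x) = (l x).get ⟨i, hi0⟩ := List.getD_eq_getElem _ _ _
      have e2 : (l x).getD (i+1) (φ x) = (l x).get ⟨i+1, hi1⟩ := List.getD_eq_getElem _ _ _
      have hw : ν < w ((l x).getD i (φ x), (l x).getD (i+1) (φ x)) := by
        rw [e1, e2]; exact hstep.2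
      have hq : (0:ℝ) ≤ (f ((l x).getD i (φ x)) - f ((l x).getD (i+1) (φ x)))^2 := sq_nonneg _
      have hgp : g ((l x).getD i (φ x), (l x).getD (i+1) (φ x))
          = w ((l x).getD i (φ x), (l x).getD (i+1) (φ x)) *
            (f ((l x).getD i (φ x)) - f ((l x).getD (i+1) (φ x)))^2 := rfl
      rw [hgp]
      have hmono := mul_le_mul_of_nonneg_left (mul_le_mul_of_nonneg_right hw.le hq)
        (inv_nonneg.mpr hν.le)
      calc (f ((l x).getD i (φ x)) - f ((l x).getD (i+1) (φ x)))^2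
          = ν⁻¹ * (ν * (f ((l x).getD i (φ x)) - f ((l x).getD (i+1) (φ x)))^2) :=
            (inv_mul_cancel_left₀ (ne_of_gt hν) _).symm
        _ ≤ ν⁻¹ * (w ((l x).getD i (φ x), (l x).getD (i+1) (φ x)) *
            (f ((l x).getD i (φ x)) - f ((l x).getD (i+1) (φ x)))^2) := hmono
    have hP0 : 0 ≤ ∑ p ∈ P x, g p := Finset.sum_nonneg fun p _ => hg0 p
    have hnL : ((n - 1 : ℕ) : ℝ) ≤ (L : ℝ) := by
      have : n - 1 ≤ L := by omega
      exact_mod_cast this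
    have c1 : ((n - 1 : ℕ) : ℝ) * S ≤ (L : ℝ) * S := mul_le_mul_of_nonneg_right hnL hS0
    have c2 : (L : ℝ) * S ≤ (L : ℝ) * (ν⁻¹ * ∑ p ∈ P x, g p) :=
      mul_le_mul_of_nonneg_left step2 (by positivity)
    have csq : f x ^ 2 ≤ 2 * f (φ x) ^ 2 + 2 * (f x - f (φ x))^2 := by
      nlinarith [sq_nonneg (f x - 2 * f (φ x))]
    have crw : (2 * (L:ℝ) / ν) * ∑ p ∈ P x, g p = 2 * ((L:ℝ) * (ν⁻¹ * ∑ p ∈ P x, g p)) := by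
      field_simp
    rw [crw]
    nlinarith [step1, c1, c2]
  -- multiplicity bound
  have hPsub : ∀ x ∈ B \ VC, P x ⊆ EG := by
    intro x hx p hp
    obtain ⟨h1, h2, h3, h4, h5⟩ := hl x hx
    rw [hPdef] at hp
    simp only [Finset.mem_image, Finset.mem_range] at hp
    obtain ⟨i, hi, rfl⟩ := hp
    have hi1 : i + 1 < (l x).length := by omega
    have hi0 : i < (l x).length := by omega
    have e1 : (l x).getD i (φ x) = (l x).get ⟨i, hi0⟩ := List.getD_eq_getElem _ _ _
    have e2 : (l x).getD (i+1) (φ x) = (l x).get ⟨i+1, hi1⟩ := List.getD_eq_getElem _ _ _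
    rw [e1, e2]
    exact (List.isChain_iff_getElem.mp h5 i (by omega)).1
  have hmult : ∑ x ∈ B \ VC, (∑ p ∈ P x, g p) ≤ (M : ℝ) * T := by
    have hx1 : ∀ x ∈ B \ VC, (∑ p ∈ P x, g p) = ∑ p ∈ EG, if p ∈ P x then g p else 0 := by
      intro x hx
      rw [← Finset.sum_filter, Finset.filter_mem_eq_inter,
        Finset.inter_eq_right.mpr (hPsub x hx)]
    rw [Finset.sum_congr rfl hx1, Finset.sum_comm]
    rw [hTdef, Finset.mul_sum]
    refine Finset.sum_le_sum fun p hp => ?_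
    rw [← Finset.sum_filter, Finset.sum_const, nsmul_eq_mul]
    have hcard : ((B \ VC).filter (fun x => p ∈ P x)).card ≤ M := by
      rw [hMdef]
      refine ball_card d L hd hL p.1 _ ?_
      intro z hz
      rw [Finset.mem_filter] at hz
      obtain ⟨hzB, hzP⟩ := hz
      obtain ⟨h1, h2, h3, h4, h5⟩ := hl z hzB
      rw [hPdef] at hzP
      simp only [Finset.mem_image, Finset.mem_range] at hzP
      obtain ⟨i, hi, hpair⟩ := hzP
      have hi0 : i < (l z).length := by omega
      have e1 : (l z).getD i (φ z) = (l z).get ⟨i, hi0⟩ := List.getD_eq_getElem _ _ _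
      have hfst : (l z).get ⟨i, hi0⟩ = p.1 := by
        rw [← e1]; exact congrArg Prod.fst hpair
      have hdist := dist_along EG hlattice (fun a b => (a, b) ∈ EG ∧ ν < w (a, b))
        (fun a b h => h.1) (l z) z h1 h5 i hi0
      rw [hfst] at hdist
      have : i ≤ L - 1 := by omega
      omega
    calc (((B \ VC).filter (fun x => p ∈ P x)).card : ℝ) * g p
        ≤ (M : ℝ) * g p := by
          refine mul_le_mul_of_nonneg_right ?_ (hg0 p)
          exact_mod_cast hcard
      _ = _ := rfl
  -- collect sums over B
  have himgφ : ∑ x ∈ B \ VC, f (φ x) ^ 2 ≤ A := by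
    have h1 : ∑ x ∈ B \ VC, f (φ x) ^ 2 = ∑ y ∈ (B \ VC).image φ, f y ^ 2 :=
      (Finset.sum_image (f := fun y => f y ^ 2) (fun x hx y hy h =>
        hφinj (Finset.mem_coe.mpr hx) (Finset.mem_coe.mpr hy) h)).symm
    rw [h1, hAdef]
    refine Finset.sum_le_sum_of_subset_of_nonneg ?_ fun _ _ _ => sq_nonneg _
    intro y hy
    obtain ⟨x, hx, rfl⟩ := Finset.mem_image.mp hy
    exact hφrange x hx
  have hVB : ∑ x ∈ V, f x ^ 2 = ∑ x ∈ B, f x ^ 2 := by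
    refine (Finset.sum_subset hB fun x _ hxB => ?_).symm
    rw [hf x hxB]; ring
  have hBsplit : ∑ x ∈ B, f x ^ 2 = ∑ x ∈ B \ VC, f x ^ 2 + ∑ x ∈ B ∩ VC, f x ^ 2 := by
    rw [← Finset.sdiff_inter_self_left B VC]
    exact (Finset.sum_sdiff (Finset.inter_subset_left)).symm
  have hinter : ∑ x ∈ B ∩ VC, f x ^ 2 ≤ A := by
    rw [hAdef]
    exact Finset.sum_le_sum_of_subset_of_nonneg Finset.inter_subset_right
      fun _ _ _ => sq_nonneg _
  have hBVC : ∑ x ∈ B \ VC, f x ^ 2 ≤ 2 * A + (2 * L / ν) * ((M : ℝ) * T) := by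
    calc ∑ x ∈ B \ VC, f x ^ 2
        ≤ ∑ x ∈ B \ VC, (2 * f (φ x) ^ 2 + (2 * L / ν) * ∑ p ∈ P x, g p) :=
          Finset.sum_le_sum hper
      _ = 2 * ∑ x ∈ B \ VC, f (φ x) ^ 2 + (2 * L / ν) * ∑ x ∈ B \ VC, ∑ p ∈ P x, g p := by
          rw [Finset.sum_add_distrib, Finset.mul_sum, Finset.mul_sum]
      _ ≤ 2 * A + (2 * L / ν) * ((M : ℝ) * T) := by
          have hc : (0:ℝ) ≤ 2 * L / ν := by positivity
          have := mul_le_mul_of_nonneg_left hmult hc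
          have := mul_le_mul_of_nonneg_left himgφ (by norm_num : (0:ℝ) ≤ 2)
          linarith
  -- the constant computation
  have hM2L : ((M : ℕ) : ℝ) * (2 * L) = (2 * (L : ℝ)) ^ (d + 1) / 2 := by
    rw [hMdef]
    push_cast
    have h2 : (2:ℝ)^(d-1) * 2 = 2^d := by
      rw [← pow_succ]; congr 1; omega
    calc (2:ℝ)^(d-1) * (L:ℝ)^d * (2 * L) = ((2:ℝ)^(d-1) * 2) * ((L:ℝ)^d * L) := by ring
      _ = 2^d * (L:ℝ)^(d+1) := by rw [h2, ← pow_succ]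
      _ = (2 * (L:ℝ))^(d+1) / 2 := by rw [mul_pow, pow_succ (2:ℝ) d]; ring
  have hc : (0:ℝ) < (2 * (L : ℝ)) ^ (d + 1) / ν + 3 / μc := by
    have hL0 : (0:ℝ) < (L:ℝ) := by exact_mod_cast (by omega : 0 < L)
    positivity
  have hgoalT : (1/2) * (∑ p ∈ EG, w p * (f p.1 - f p.2) ^ 2) = (1/2) * T := rfl
  rw [hgoalT, inv_mul_le_iff₀ hc]
  -- final arithmetic
  have hA3 : 3 * A ≤ 3 / μc * ((1/2) * T) := by
    rw [div_mul_eq_mul_div, le_div_iff₀ hμ]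
    linarith
  have hMterm : (2 * (L:ℝ) / ν) * ((M : ℝ) * T) = ((2 * (L:ℝ))^(d+1) / ν) * ((1/2) * T) := by
    have e1 : (2 * (L:ℝ) / ν) * ((M : ℝ) * T) = ((M : ℝ) * (2 * L)) * T / ν := by ring
    rw [e1, hM2L]; ring
  have htotal : ∑ x ∈ V, f x ^ 2 ≤ 3 * A + (2 * L / ν) * ((M : ℝ) * T) := by
    rw [hVB, hBsplit]; linarith
  rw [add_mul]
  rw [hMterm] at htotal
  linarith
end

section
/- Eigenvector mass bound near a near-minimal site: Let B_n ⊂ Z^d be a finite box, w positive edge weights, and let ψ be the nonnegative ℓ^2-normalized principal Dirichlet eigenvector of −L_w on B_n with eigenvalue λ, where (L_w f)(x) = Σ_{y∼x} w_{xy}(f(y)−f(x)). Let y, z ∈ B_n with π_z < π_y (π_x = Σ_{u∼x} w_{xu}) and y not adjacent to z. Set m_y = 2·max_{x∼y} ψ(x). Then ψ(y) ≤ m_y / (1 − π_z/π_y). -/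
set_option maxHeartbeats 1600000 in
/-- Eigenvector mass bound near a near-minimal site.  Let `ψ` be the nonnegative
`ℓ²`-normalized principal Dirichlet eigenvector of `−L_w` on the box `B_n ⊂ ℤ^d`
(characterized as the minimizer of the Dirichlet energy among normalized functions
supported in `B_n`, with eigenvalue `λ = E^w(ψ)`), let `y, z ∈ B_n` with `π_z < π_y`
and `y` not adjacent to `z`, and set `m_y = 2 max_{x ∼ y} ψ(x)`.  Then
`ψ(y) ≤ m_y / (1 − π_z/π_y)`. -/
theorem stmt8 (d n : ℕ) (hd : 0 < d)
    (w : (Fin d → ℤ) → (Fin d → ℤ) → ℝ)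
    (hwpos : ∀ x y, 0 < w x y) (hwsym : ∀ x y, w x y = w y x)
    (Bn Bnp : Finset (Fin d → ℤ))
    (hBn : Bn = Fintype.piFinset fun _ => Finset.Icc (-(n : ℤ)) n)
    (hBnp : Bnp = Fintype.piFinset fun _ => Finset.Icc (-(n : ℤ) - 1) ((n : ℤ) + 1))
    (π : (Fin d → ℤ) → ℝ)
    (hπ : ∀ x, π x = ∑ y ∈ Bnp, if (∑ i, (x i - y i).natAbs) = 1 then w x y else 0)
    (energy : ((Fin d → ℤ) → ℝ) → ℝ)
    (henergy : ∀ f, energy f = (1 / 2) * ∑ x ∈ Bnp, ∑ y ∈ Bnp,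
        if (∑ i, (x i - y i).natAbs) = 1 then w x y * (f x - f y) ^ 2 else 0)
    (ψ : (Fin d → ℤ) → ℝ) (lam : ℝ)
    (hψ0 : ∀ x, 0 ≤ ψ x) (hψsupp : ∀ x ∉ Bn, ψ x = 0)
    (hψnorm : ∑ x ∈ Bnp, ψ x ^ 2 = 1)
    (hlam : energy ψ = lam)
    (hmin : ∀ f : (Fin d → ℤ) → ℝ, (∀ x ∉ Bn, f x = 0) →
        (∑ x ∈ Bnp, f x ^ 2 = 1) → lam ≤ energy f)
    (y z : Fin d → ℤ) (hy : y ∈ Bn) (hz : z ∈ Bn)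
    (hπlt : π z < π y)
    (hnadj : (∑ i, (y i - z i).natAbs) ≠ 1)
    (my : ℝ)
    (hmy : my = 2 * sSup {r | ∃ x, (∑ i, (x i - y i).natAbs) = 1 ∧ r = ψ x}) :
    ψ y ≤ my / (1 - π z / π y) := by
  
  by_contra hcon
  push_neg at hcon
  classical
  -- Bn ⊆ Bnp
  have hBsub : Bn ⊆ Bnp := by
    intro x hx
    rw [hBn, Fintype.mem_piFinset] at hx
    rw [hBnp, Fintype.mem_piFinset]
    intro i
    have h := hx i
    simp only [Finset.mem_Icc] at h ⊢
    omega
  have hyS : y ∈ Bnp := hBsub hy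
  have hzS : z ∈ Bnp := hBsub hz
  have hyz : y ≠ z := by rintro rfl; exact lt_irrefl _ hπlt
  have hAsymm : ∀ a b : Fin d → ℤ, (∑ i, (a i - b i).natAbs) = ∑ i, (b i - a i).natAbs :=
    fun a b => Finset.sum_congr rfl fun i _ => by rw [← Int.natAbs_neg, neg_sub]
  -- existence of a neighbor inside Bnp
  have hnbr : ∀ a : Fin d → ℤ, a ∈ Bn → ∃ x ∈ Bnp, (∑ i, (x i - a i).natAbs) = 1 := by
    intro a ha
    rw [hBn, Fintype.mem_piFinset] at ha
    refine ⟨Function.update a ⟨0, hd⟩ (a ⟨0, hd⟩ + 1), ?_, ?_⟩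
    · rw [hBnp, Fintype.mem_piFinset]
      intro i
      have h1 := ha i
      simp only [Finset.mem_Icc] at h1 ⊢
      by_cases hi : i = ⟨0, hd⟩
      · subst hi; rw [Function.update_self]; omega
      · rw [Function.update_of_ne hi]; omega
    · rw [Finset.sum_eq_single (⟨0, hd⟩ : Fin d)]
      · rw [Function.update_self]; simp
      · intro i _ hi; rw [Function.update_of_ne hi]; simp
      · intro h; exact absurd (Finset.mem_univ _) h
  -- positivity of π on Bn
  have hπpos : ∀ a ∈ Bn, 0 < π a := by
    intro a ha
    obtain ⟨x, hxS, hxadj⟩ := hnbr a ha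
    have hax : (∑ i, (a i - x i).natAbs) = 1 := by rw [hAsymm a x]; exact hxadj
    rw [hπ]
    refine Finset.sum_pos' (fun u _ => ?_) ⟨x, hxS, ?_⟩
    · split_ifs
      · exact (hwpos a u).le
      · exact le_refl 0
    · rw [if_pos hax]; exact hwpos a x
  have hπy := hπpos y hy
  have hπz := hπpos z hz
  -- ψ is bounded by 1
  have hψle1 : ∀ x, ψ x ≤ 1 := by
    intro x
    by_cases hx : x ∈ Bn
    · have h1 : ψ x ^ 2 ≤ 1 := by
        rw [← hψnorm]
        exact Finset.single_le_sum (fun u _ => sq_nonneg (ψ u)) (hBsub hx)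
      nlinarith [hψ0 x]
    · rw [hψsupp x hx]; norm_num
  -- sSup facts
  have hbdd : BddAbove {r | ∃ x, (∑ i, (x i - y i).natAbs) = 1 ∧ r = ψ x} :=
    ⟨1, fun r hr => by obtain ⟨x, _, rfl⟩ := hr; exact hψle1 x⟩
  have hmy2 : ∀ x : Fin d → ℤ, (∑ i, (x i - y i).natAbs) = 1 → 2 * ψ x ≤ my := by
    intro x hx
    have := le_csSup hbdd (⟨x, hx, rfl⟩ : ψ x ∈ {r | ∃ x, (∑ i, (x i - y i).natAbs) = 1 ∧ r = ψ x})
    rw [hmy]; linarith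
  have hmy0 : 0 ≤ my := by
    obtain ⟨x0, _, hx0⟩ := hnbr y hy
    have := hmy2 x0 hx0
    have := hψ0 x0
    linarith
  -- consequences of the contradiction hypothesis
  have ht : 0 < 1 - π z / π y := by
    have : π z / π y < 1 := (div_lt_one hπy).mpr hπlt
    linarith
  have hkey : my < ψ y * (1 - π z / π y) := by
    rw [div_lt_iff₀ ht] at hcon; linarith
  have hfact : (1 - π z / π y) * π y = π y - π z := by field_simp
  have hkey2 : my * π y < ψ y * (π y - π z) := by
    calc my * π y < ψ y * (1 - π z / π y) * π y :=
          mul_lt_mul_of_pos_right hkey hπy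
      _ = ψ y * (π y - π z) := by rw [mul_assoc, hfact]
  have htlt1 : 1 - π z / π y < 1 := by
    have : 0 < π z / π y := div_pos hπz hπy
    linarith
  have hmylt : my < ψ y := by
    have h1 : ψ y * (1 - π z / π y) ≤ ψ y * 1 :=
      mul_le_mul_of_nonneg_left htlt1.le (hψ0 y)
    nlinarith
  have hψypos : 0 < ψ y := lt_of_le_of_lt hmy0 hmylt
  -- the modified value at z
  have hrad : 0 ≤ ψ y ^ 2 + ψ z ^ 2 - my ^ 2 := by nlinarith [hψ0 z]
  set φz : ℝ := Real.sqrt (ψ y ^ 2 + ψ z ^ 2 - my ^ 2) with hφzdef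
  have hφzsq : φz ^ 2 = ψ y ^ 2 + ψ z ^ 2 - my ^ 2 := Real.sq_sqrt hrad
  have hφzge : ψ z ≤ φz := by
    have h1 : ψ z = Real.sqrt (ψ z ^ 2) := (Real.sqrt_sq (hψ0 z)).symm
    rw [h1, hφzdef]
    exact Real.sqrt_le_sqrt (by nlinarith)
  -- the test function
  set φ : (Fin d → ℤ) → ℝ := fun x => if x = y then my else if x = z then φz else ψ x
    with hφdef
  have hφy : φ y = my := by simp [hφdef]
  have hφz : φ z = φz := by simp [hφdef, hyz.symm]
  have hφoth : ∀ x : Fin d → ℤ, x ≠ y → x ≠ z → φ x = ψ x := by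
    intro x hxy hxz
    simp [hφdef, hxy, hxz]
  -- support
  have hsuppφ : ∀ x ∉ Bn, φ x = 0 := by
    intro x hx
    have hxy : x ≠ y := by rintro rfl; exact hx hy
    have hxz : x ≠ z := by rintro rfl; exact hx hz
    rw [hφoth x hxy hxz]; exact hψsupp x hx
  have hpairS : ({y, z} : Finset (Fin d → ℤ)) ⊆ Bnp := by
    intro a ha
    simp only [Finset.mem_insert, Finset.mem_singleton] at ha
    rcases ha with rfl | rfl
    · exact hyS
    · exact hzS
  -- normalization
  have hnormφ : ∑ x ∈ Bnp, φ x ^ 2 = 1 := by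
    have hdiff : ∑ x ∈ Bnp, (φ x ^ 2 - ψ x ^ 2) = 0 := by
      rw [← Finset.sum_subset hpairS (fun x _ hx => ?_)]
      · rw [Finset.sum_pair hyz, hφy, hφz, hφzsq]; ring
      · simp only [Finset.mem_insert, Finset.mem_singleton] at hx
        push_neg at hx
        rw [hφoth x hx.1 hx.2]; ring
    rw [Finset.sum_sub_distrib, hψnorm] at hdiff
    linarith
  -- notation for the energy summand
  set T : ((Fin d → ℤ) → ℝ) → (Fin d → ℤ) → (Fin d → ℤ) → ℝ :=
    fun f a b => if (∑ i, (a i - b i).natAbs) = 1 then w a b * (f a - f b) ^ 2 else 0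
    with hT
  set c1 : ℝ := ψ y * (my - ψ y) with hc1
  set c2 : ℝ := ψ y ^ 2 - my ^ 2 with hc2
  -- row at y
  have hrowy : ∑ b ∈ Bnp, (T φ y b - T ψ y b) ≤ c1 * π y := by
    have hterm : ∀ b ∈ Bnp, T φ y b - T ψ y b ≤
        (if (∑ i, (y i - b i).natAbs) = 1 then w y b * c1 else 0) := by
      intro b _
      by_cases hb : (∑ i, (y i - b i).natAbs) = 1
      · have hby : b ≠ y := by rintro rfl; simp at hb
        have hbz : b ≠ z := by rintro rfl; exact hnadj hb
        have h2u : 2 * ψ b ≤ my := hmy2 b (by rw [hAsymm b y]; exact hb)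
        simp only [hT, if_pos hb]
        rw [hφy, hφoth b hby hbz, ← mul_sub]
        have hin : (my - ψ b) ^ 2 - (ψ y - ψ b) ^ 2 ≤ c1 := by
          rw [hc1]
          nlinarith [mul_nonneg (by linarith : (0:ℝ) ≤ ψ y - my)
            (by linarith : (0:ℝ) ≤ my - 2 * ψ b)]
        exact mul_le_mul_of_nonneg_left hin (hwpos y b).le
      · simp only [hT, if_neg hb]; simp
    calc ∑ b ∈ Bnp, (T φ y b - T ψ y b)
        ≤ ∑ b ∈ Bnp, (if (∑ i, (y i - b i).natAbs) = 1 then w y b * c1 else 0) :=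
          Finset.sum_le_sum hterm
      _ = (∑ b ∈ Bnp, if (∑ i, (y i - b i).natAbs) = 1 then w y b else 0) * c1 := by
          rw [Finset.sum_mul]
          refine Finset.sum_congr rfl fun b _ => ?_
          split_ifs <;> ring
      _ = c1 * π y := by rw [← hπ y, mul_comm]
  -- row at z
  have hrowz : ∑ b ∈ Bnp, (T φ z b - T ψ z b) ≤ c2 * π z := by
    have hterm : ∀ b ∈ Bnp, T φ z b - T ψ z b ≤
        (if (∑ i, (z i - b i).natAbs) = 1 then w z b * c2 else 0) := by
      intro b _
      by_cases hb : (∑ i, (z i - b i).natAbs) = 1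
      · have hbz : b ≠ z := by rintro rfl; simp at hb
        have hby : b ≠ y := by rintro rfl; rw [hAsymm z b] at hb; exact hnadj hb
        simp only [hT, if_pos hb]
        rw [hφz, hφoth b hby hbz, ← mul_sub]
        have hin : (φz - ψ b) ^ 2 - (ψ z - ψ b) ^ 2 ≤ c2 := by
          rw [hc2]
          nlinarith [hφzsq, mul_nonneg (hψ0 b) (by linarith : (0:ℝ) ≤ φz - ψ z)]
        exact mul_le_mul_of_nonneg_left hin (hwpos z b).le
      · simp only [hT, if_neg hb]; simp
    calc ∑ b ∈ Bnp, (T φ z b - T ψ z b)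
        ≤ ∑ b ∈ Bnp, (if (∑ i, (z i - b i).natAbs) = 1 then w z b * c2 else 0) :=
          Finset.sum_le_sum hterm
      _ = (∑ b ∈ Bnp, if (∑ i, (z i - b i).natAbs) = 1 then w z b else 0) * c2 := by
          rw [Finset.sum_mul]
          refine Finset.sum_congr rfl fun b _ => ?_
          split_ifs <;> ring
      _ = c2 * π z := by rw [← hπ z, mul_comm]
  -- rows away from y and z
  have hrest : ∀ x ∈ Bnp \ {y, z}, ∑ b ∈ Bnp, (T φ x b - T ψ x b) ≤
      (if (∑ i, (x i - y i).natAbs) = 1 then w x y * c1 else 0) +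
      (if (∑ i, (x i - z i).natAbs) = 1 then w x z * c2 else 0) := by
    intro x hx
    simp only [Finset.mem_sdiff, Finset.mem_insert, Finset.mem_singleton] at hx
    obtain ⟨hxS, hxyz⟩ := hx
    push_neg at hxyz
    obtain ⟨hxy, hxz⟩ := hxyz
    have hφx : φ x = ψ x := hφoth x hxy hxz
    have hstep : ∑ b ∈ Bnp, (T φ x b - T ψ x b) =
        (T φ x y - T ψ x y) + (T φ x z - T ψ x z) := by
      rw [← Finset.sum_subset hpairS (fun b _ hb => ?_), Finset.sum_pair hyz]
      simp only [Finset.mem_insert, Finset.mem_singleton] at hb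
      push_neg at hb
      simp only [hT, hφx, hφoth b hb.1 hb.2, sub_self]
    rw [hstep]
    refine add_le_add ?_ ?_
    · by_cases hb : (∑ i, (x i - y i).natAbs) = 1
      · rw [if_pos hb]
        have h2u : 2 * ψ x ≤ my := hmy2 x hb
        simp only [hT, if_pos hb]
        rw [hφx, hφy, ← mul_sub]
        have hin : (ψ x - my) ^ 2 - (ψ x - ψ y) ^ 2 ≤ c1 := by
          rw [hc1]
          nlinarith [mul_nonneg (by linarith : (0:ℝ) ≤ ψ y - my)
            (by linarith : (0:ℝ) ≤ my - 2 * ψ x)]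
        exact mul_le_mul_of_nonneg_left hin (hwpos x y).le
      · simp only [hT, if_neg hb]; simp
    · by_cases hb : (∑ i, (x i - z i).natAbs) = 1
      · rw [if_pos hb]
        simp only [hT, if_pos hb]
        rw [hφx, hφz, ← mul_sub]
        have hin : (ψ x - φz) ^ 2 - (ψ x - ψ z) ^ 2 ≤ c2 := by
          rw [hc2]
          nlinarith [hφzsq, mul_nonneg (hψ0 x) (by linarith : (0:ℝ) ≤ φz - ψ z)]
        exact mul_le_mul_of_nonneg_left hin (hwpos x z).le
      · simp only [hT, if_neg hb]; simp
  -- summing the rest rows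
  have hsum_rest : ∑ x ∈ Bnp \ {y, z}, ∑ b ∈ Bnp, (T φ x b - T ψ x b) ≤
      c1 * π y + c2 * π z := by
    have h1 : ∑ x ∈ Bnp \ {y, z}, ∑ b ∈ Bnp, (T φ x b - T ψ x b) ≤
        ∑ x ∈ Bnp \ {y, z},
          ((if (∑ i, (x i - y i).natAbs) = 1 then w x y * c1 else 0) +
           (if (∑ i, (x i - z i).natAbs) = 1 then w x z * c2 else 0)) :=
      Finset.sum_le_sum hrest
    have h2 : ∑ x ∈ Bnp \ {y, z},
          ((if (∑ i, (x i - y i).natAbs) = 1 then w x y * c1 else 0) +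
           (if (∑ i, (x i - z i).natAbs) = 1 then w x z * c2 else 0)) =
        ∑ x ∈ Bnp,
          ((if (∑ i, (x i - y i).natAbs) = 1 then w x y * c1 else 0) +
           (if (∑ i, (x i - z i).natAbs) = 1 then w x z * c2 else 0)) := by
      refine Finset.sum_subset (Finset.sdiff_subset) (fun x hxS hx => ?_)
      have hxmem : x ∈ ({y, z} : Finset (Fin d → ℤ)) := by
        by_contra hc
        exact hx (Finset.mem_sdiff.mpr ⟨hxS, hc⟩)
      simp only [Finset.mem_insert, Finset.mem_singleton] at hxmem
      rcases hxmem with rfl | rfl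
      · have e1 : ¬ (∑ i, (x i - x i).natAbs) = 1 := by simp
        have e2 : ¬ (∑ i, (x i - z i).natAbs) = 1 := hnadj
        rw [if_neg e1, if_neg e2]; ring
      · have e1 : ¬ (∑ i, (x i - y i).natAbs) = 1 := by
          rw [hAsymm x y]; exact hnadj
        have e2 : ¬ (∑ i, (x i - x i).natAbs) = 1 := by simp
        rw [if_neg e1, if_neg e2]; ring
    have hcol : ∀ (a : Fin d → ℤ) (c : ℝ),
        (∑ x ∈ Bnp, if (∑ i, (x i - a i).natAbs) = 1 then w x a * c else 0) = c * π a := by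
      intro a c
      rw [hπ a, Finset.mul_sum]
      refine Finset.sum_congr rfl fun b _ => ?_
      rw [hAsymm b a, hwsym b a]
      split_ifs <;> ring
    have h3 : ∑ x ∈ Bnp,
          ((if (∑ i, (x i - y i).natAbs) = 1 then w x y * c1 else 0) +
           (if (∑ i, (x i - z i).natAbs) = 1 then w x z * c2 else 0)) =
        c1 * π y + c2 * π z := by
      rw [Finset.sum_add_distrib, hcol y c1, hcol z c2]
    linarith [h1, h2.le, h3.le]
  -- total difference of energies
  have hG : ∑ a ∈ Bnp, ∑ b ∈ Bnp, (T φ a b - T ψ a b) ≤ 2 * (c1 * π y + c2 * π z) := by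
    have hsplit : ∑ a ∈ Bnp, ∑ b ∈ Bnp, (T φ a b - T ψ a b) =
        (∑ a ∈ Bnp \ {y, z}, ∑ b ∈ Bnp, (T φ a b - T ψ a b)) +
        ((∑ b ∈ Bnp, (T φ y b - T ψ y b)) + (∑ b ∈ Bnp, (T φ z b - T ψ z b))) := by
      rw [← Finset.sum_sdiff hpairS, Finset.sum_pair hyz]
    rw [hsplit]
    linarith [hsum_rest, hrowy, hrowz]
  -- relate to the energy functional
  have hDφ : energy φ = (1 / 2 : ℝ) * ∑ a ∈ Bnp, ∑ b ∈ Bnp, T φ a b := by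
    rw [henergy]
  have hDψ : energy ψ = (1 / 2 : ℝ) * ∑ a ∈ Bnp, ∑ b ∈ Bnp, T ψ a b := by
    rw [henergy]
  have hsubdist : ∑ a ∈ Bnp, ∑ b ∈ Bnp, (T φ a b - T ψ a b) =
      (∑ a ∈ Bnp, ∑ b ∈ Bnp, T φ a b) - ∑ a ∈ Bnp, ∑ b ∈ Bnp, T ψ a b := by
    rw [← Finset.sum_sub_distrib]
    exact Finset.sum_congr rfl fun a _ => Finset.sum_sub_distrib _ _
  have hle := hmin φ hsuppφ hnormφ
  have hΔ : c1 * π y + c2 * π z < 0 := by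
    rw [hc1, hc2]
    nlinarith [mul_pos hψypos (sub_pos.mpr hkey2),
      mul_nonneg (mul_nonneg hmy0 hmy0) hπz.le]
  rw [hsubdist] at hG
  rw [hDψ] at hlam
  rw [hDφ] at hle
  linarith
end

section
/- Second Borel–Cantelli-type divergence: If g: (0,∞) → (0,∞) decreases monotonically to zero and ∫_0^∞ u^{d−1} P[w ≤ g(u)]^m du = ∞, where m = |𝔄| for a finite edge set 𝔄 ⊆ 𝔈(B_b), then almost surely, for infinitely many n there exists z ∈ B_{n+b} such that every edge e ∈ 𝔄 + z has conductance w_e ≤ g(n). -/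
open MeasureTheory ProbabilityTheory Filter
open scoped ENNReal NNReal

/-- Restricting an `ℝ≥0∞`-valued sum to disjoint finsets gives a lower bound. -/
lemma aux_tsum_blocks {α : Type*} (f : α → ℝ≥0∞) (S : ℕ → Finset α)
    (hd : ∀ k k' v, v ∈ S k → v ∈ S k' → k = k') :
    ∑' k, ∑ v ∈ S k, f v ≤ ∑' v, f v := by
  have h1 : ∀ k, ∑ v ∈ S k, f v = ∑' v : {v // v ∈ S k}, f v :=
    fun k => (Finset.tsum_subtype (S k) f).symm
  calc ∑' k, ∑ v ∈ S k, f v = ∑' k, ∑' v : {v // v ∈ S k}, f v := by simp_rw [h1]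
    _ = ∑' x : Σ k, {v // v ∈ S k}, f x.2 :=
        (ENNReal.tsum_sigma' (fun x : Σ k, {v // v ∈ S k} => f x.2)).symm
    _ ≤ ∑' v, f v := by
        refine ENNReal.tsum_comp_le_tsum_of_injective
          (f := fun x : Σ k, {v // v ∈ S k} => (x.2 : α)) ?_ f
        rintro ⟨k, ⟨v, hv⟩⟩ ⟨k', ⟨v', hv'⟩⟩ h
        dsimp at h
        subst h
        have : k = k' := hd _ _ v hv hv'
        subst this
        rfl

/-- Comparison of a divergent integral with a series, with scaled/shifted arguments. -/
lemma aux_div (ψ : ℝ → ℝ) (hanti : Antitone ψ) (hψ0 : ∀ x, 0 ≤ ψ x) (hψ1 : ∀ x, ψ x ≤ 1)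
    (c bR : ℝ) (hc : 1 ≤ c) (hb : 0 ≤ bR) (hbc : bR ≤ c) (d : ℕ)
    (hdiv : ∫⁻ u in Set.Ioi (0:ℝ), ENNReal.ofReal (u ^ (d-1) * ψ u) = ⊤) :
    ∑' k : ℕ, ENNReal.ofReal (((k:ℝ)+1)^(d-1)) * ENNReal.ofReal (ψ (c*k+bR)) = ⊤ := by
  have hc0 : (0:ℝ) < c := lt_of_lt_of_le one_pos hc
  set h : ℝ → ℝ≥0∞ := fun u => ENNReal.ofReal (u ^ (d-1) * ψ u) with hh
  -- Step 1: integral over `Ioi bR` is infinite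
  have h1 : ∫⁻ u in Set.Ioi bR, h u = ⊤ := by
    by_contra hne
    have hsplit : Set.Ioc 0 bR ∪ Set.Ioi bR = Set.Ioi (0:ℝ) := Set.Ioc_union_Ioi_eq_Ioi hb
    have heq : ∫⁻ u in Set.Ioi (0:ℝ), h u
        = (∫⁻ u in Set.Ioc 0 bR, h u) + ∫⁻ u in Set.Ioi bR, h u := by
      rw [← hsplit, lintegral_union measurableSet_Ioi (Set.Ioc_disjoint_Ioi le_rfl)]
    have hfin1 : (∫⁻ u in Set.Ioc 0 bR, h u) ≠ ⊤ := by
      have hle : ∫⁻ u in Set.Ioc 0 bR, h u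
          ≤ ∫⁻ _ in Set.Ioc 0 bR, ENNReal.ofReal (bR ^ (d-1)) := by
        refine setLIntegral_mono measurable_const fun u hu => ?_
        refine ENNReal.ofReal_le_ofReal ?_
        calc u ^ (d-1) * ψ u ≤ bR ^ (d-1) * 1 :=
              mul_le_mul (pow_le_pow_left₀ hu.1.le hu.2 _) (hψ1 u) (hψ0 u) (pow_nonneg hb _)
          _ = bR ^ (d-1) := mul_one _
      refine ne_top_of_le_ne_top ?_ hle
      rw [setLIntegral_const]
      exact ENNReal.mul_ne_top ENNReal.ofReal_ne_top
        (by rw [Real.volume_Ioc]; exact ENNReal.ofReal_ne_top)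
    rw [heq] at hdiv
    rcases ENNReal.add_eq_top.mp hdiv with h' | h'
    · exact hfin1 h'
    · exact hne h'
  -- Step 2: decompose `Ioi bR` into intervals
  have hUnion : Set.Ioi bR = ⋃ k : ℕ, Set.Ioc (c*k+bR) (c*(k+1)+bR) := by
    ext u
    simp only [Set.mem_Ioi, Set.mem_iUnion, Set.mem_Ioc]
    constructor
    · intro hu
      have hx0 : 0 < (u - bR)/c := div_pos (by linarith) hc0
      have hceil : 1 ≤ ⌈(u - bR)/c⌉₊ := Nat.ceil_pos.mpr hx0
      refine ⟨⌈(u - bR)/c⌉₊ - 1, ?_, ?_⟩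
      · have hlt : ((⌈(u - bR)/c⌉₊ - 1 : ℕ) : ℝ) < (u - bR)/c := by
          rw [Nat.cast_sub hceil]
          have := Nat.ceil_lt_add_one hx0.le
          push_cast
          linarith
        have h2 := (lt_div_iff₀ hc0).mp hlt
        linarith
      · have h3 : (u - bR)/c ≤ (⌈(u - bR)/c⌉₊ : ℝ) := Nat.le_ceil _
        have h4 : ((⌈(u-bR)/c⌉₊ - 1 : ℕ) : ℝ) + 1 = (⌈(u-bR)/c⌉₊ : ℝ) := by
          rw [Nat.cast_sub hceil]; push_cast; ring
        have h5 := (div_le_iff₀ hc0).mp h3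
        rw [h4]
        linarith
    · rintro ⟨k, hk1, _⟩
      have h6 : (0:ℝ) ≤ c * k := by positivity
      linarith
  have hmeasI : ∀ k : ℕ, MeasurableSet (Set.Ioc (c*k+bR) (c*(k+1)+bR)) :=
    fun _ => measurableSet_Ioc
  have hdisjI : Pairwise (Function.onFun Disjoint
      fun k : ℕ => Set.Ioc (c*k+bR) (c*(k+1)+bR)) := by
    intro k l hkl
    rcases hkl.lt_or_gt with hlt | hlt
    · refine Set.Ioc_disjoint_Ioc.mpr ?_
      refine le_trans (min_le_left _ _) (le_max_of_le_right ?_)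
      have hcast : (k:ℝ) + 1 ≤ (l:ℝ) := by exact_mod_cast hlt
      nlinarith
    · refine Set.Ioc_disjoint_Ioc.mpr ?_
      refine le_trans (min_le_right _ _) (le_max_of_le_left ?_)
      have hcast : (l:ℝ) + 1 ≤ (k:ℝ) := by exact_mod_cast hlt
      nlinarith
  rw [hUnion, lintegral_iUnion hmeasI hdisjI] at h1
  -- Step 3: bound each piece
  set β : ℕ → ℝ≥0∞ := fun k => ENNReal.ofReal ((c*(k+1)+bR)^(d-1) * ψ (c*k+bR)) with hβ
  have hint : ∀ k : ℕ, (∫⁻ u in Set.Ioc (c*k+bR) (c*(k+1)+bR), h u) ≤ β k * ENNReal.ofReal c := by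
    intro k
    have hle : ∫⁻ u in Set.Ioc (c*k+bR) (c*(k+1)+bR), h u
        ≤ ∫⁻ _ in Set.Ioc (c*k+bR) (c*(k+1)+bR), β k := by
      refine setLIntegral_mono measurable_const fun u hu => ?_
      refine ENNReal.ofReal_le_ofReal ?_
      have hu0 : 0 ≤ u := le_trans (by positivity) hu.1.le
      exact mul_le_mul (pow_le_pow_left₀ hu0 hu.2 _) (hanti hu.1.le) (hψ0 u)
        (pow_nonneg (by positivity) _)
    refine le_trans hle ?_
    rw [setLIntegral_const, Real.volume_Ioc]
    have hdd : c*(k+1)+bR - (c*k+bR) = c := by ring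
    rw [hdd]
  have hβtop : ∑' k, β k = ⊤ := by
    by_contra hne
    have hle2 : ∑' k : ℕ, (∫⁻ u in Set.Ioc (c*k+bR) (c*(k+1)+bR), h u)
        ≤ (∑' k, β k) * ENNReal.ofReal c := by
      rw [← ENNReal.tsum_mul_right]; exact ENNReal.tsum_le_tsum hint
    rw [h1] at hle2
    exact (ENNReal.mul_ne_top hne ENNReal.ofReal_ne_top) (top_le_iff.mp hle2)
  -- Step 4: extract the series
  by_contra hne
  have hβle : ∀ k : ℕ, β k ≤ ENNReal.ofReal ((2*c)^(d-1))
      * (ENNReal.ofReal (((k:ℝ)+1)^(d-1)) * ENNReal.ofReal (ψ (c*k+bR))) := by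
    intro k
    have hkk : (0:ℝ) ≤ (k:ℝ)+1 := by positivity
    have hck : (0:ℝ) ≤ c*((k:ℝ)+1)+bR := by nlinarith [Nat.cast_nonneg (α := ℝ) k]
    have hle : (c*((k:ℝ)+1)+bR)^(d-1) * ψ (c*k+bR)
        ≤ ((2*c)^(d-1) * (((k:ℝ)+1)^(d-1))) * ψ (c*k+bR) := by
      refine mul_le_mul_of_nonneg_right ?_ (hψ0 _)
      rw [← mul_pow]
      refine pow_le_pow_left₀ hck ?_ _
      nlinarith [Nat.cast_nonneg (α := ℝ) k]
    calc β k ≤ ENNReal.ofReal (((2*c)^(d-1) * (((k:ℝ)+1)^(d-1))) * ψ (c*k+bR)) :=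
          ENNReal.ofReal_le_ofReal hle
      _ = ENNReal.ofReal ((2*c)^(d-1))
          * (ENNReal.ofReal (((k:ℝ)+1)^(d-1)) * ENNReal.ofReal (ψ (c*k+bR))) := by
          rw [ENNReal.ofReal_mul (mul_nonneg (pow_nonneg (by linarith) _) (pow_nonneg hkk _)),
            ENNReal.ofReal_mul (pow_nonneg (by linarith) _), mul_assoc]
  have hle3 := ENNReal.tsum_le_tsum hβle
  rw [hβtop, ENNReal.tsum_mul_left] at hle3
  exact (ENNReal.mul_ne_top ENNReal.ofReal_ne_top hne) (top_le_iff.mp hle3)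

/-- Second Borel–Cantelli-type divergence (Lemma 2.1, divergent case).  Conductances
`(w_e)` are i.i.d., indexed by the edges `(x, i)` of `ℤ^d` (site plus positive axis
direction), `d ≥ 2`.  If `g : (0,∞) → (0,∞)` decreases monotonically to zero and
`∫_0^∞ u^{d−1} P[w ≤ g(u)]^m du = ∞` with `m = |𝔄|` for a finite edge set
`𝔄 ⊆ 𝔈(B_b)`, then almost surely, for infinitely many `n` there exists `z ∈ B_{n+b}`
such that every edge `e ∈ 𝔄 + z` has conductance `w_e ≤ g(n)`. -/
theorem stmt12 {Ω : Type*} [MeasurableSpace Ω] (μ : Measure Ω) [IsProbabilityMeasure μ]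
    (d b : ℕ) (hd : 2 ≤ d)
    (w : ((Fin d → ℤ) × Fin d) → Ω → ℝ)
    (hmeas : ∀ e, Measurable (w e))
    (hpos : ∀ e ω, 0 < w e ω)
    (hindep : iIndepFun w μ)
    (hident : ∀ e e', IdentDistrib (w e) (w e') μ μ)
    (g : ℝ → ℝ) (hganti : Antitone g) (hgpos : ∀ u, 0 < u → 0 < g u)
    (hg0 : Tendsto g atTop (nhds 0))
    (𝔄 : Finset ((Fin d → ℤ) × Fin d))
    (h𝔄 : ∀ e ∈ 𝔄, ∀ i, |e.1 i| ≤ (b : ℤ))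
    (F : ℝ → ℝ)
    (hF : ∀ u, F u = (μ {ω | w ((fun _ => 0), ⟨0, by omega⟩) ω ≤ u}).toReal)
    (hdiv : ∫⁻ u in Set.Ioi (0 : ℝ),
        ENNReal.ofReal (u ^ (d - 1) * F (g u) ^ 𝔄.card) = ⊤) :
    μ {ω | ∃ᶠ n : ℕ in atTop, ∃ z : Fin d → ℤ, (∀ i, |z i| ≤ (n : ℤ) + b) ∧
        ∀ e ∈ 𝔄, w (e.1 + z, e.2) ω ≤ g n} = 1 := by
  classical
  have hd1 : 0 < d := by omega
  set i₀ : Fin d := ⟨0, hd1⟩ with hi₀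
  set c : ℕ := 2 * b + 1 with hc
  -- basic facts about F
  have hF0 : ∀ u, 0 ≤ F u := fun u => by rw [hF]; exact ENNReal.toReal_nonneg
  have hF1 : ∀ u, F u ≤ 1 := by
    intro u
    rw [hF]
    exact le_trans (ENNReal.toReal_mono ENNReal.one_ne_top prob_le_one) (by simp)
  have hFmono : Monotone F := by
    intro u u' huu'
    rw [hF, hF]
    exact ENNReal.toReal_mono (measure_ne_top μ _)
      (measure_mono fun ω hω => le_trans hω huu')
  set ψ : ℝ → ℝ := fun u => F (g u) ^ 𝔄.card with hψ
  have hψ0 : ∀ x, 0 ≤ ψ x := fun x => pow_nonneg (hF0 _) _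
  have hψ1 : ∀ x, ψ x ≤ 1 := fun x => pow_le_one₀ (hF0 _) (hF1 _)
  have hψanti : Antitone ψ := by
    intro x y hxy
    exact pow_le_pow_left₀ (hF0 _) (hFmono (hganti hxy)) _
  -- the shift maps
  set M : (Fin d → ℕ) → ℕ := fun v => Finset.univ.sup v with hM
  set sh : (Fin d → ℕ) → ((Fin d → ℤ) × Fin d) → ((Fin d → ℤ) × Fin d) :=
    fun v e => (e.1 + fun i => (c : ℤ) * (v i : ℤ), e.2) with hsh
  have hshinj : ∀ (v v' : Fin d → ℕ) (e e' : (Fin d → ℤ) × Fin d), e ∈ 𝔄 → e' ∈ 𝔄 →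
      sh v e = sh v' e' → v = v' ∧ e = e' := by
    intro v v' e e' he he' hEq
    have h2 : e.2 = e'.2 := (Prod.ext_iff.mp hEq).2
    have h1 : ∀ i, e.1 i + (c:ℤ) * (v i) = e'.1 i + (c:ℤ) * (v' i) := by
      intro i
      have := congrFun (Prod.ext_iff.mp hEq).1 i
      exact this
    have hv : ∀ i, (v i : ℤ) = (v' i : ℤ) := by
      intro i
      have hb1 := abs_le.mp (h𝔄 e he i)
      have hb2 := abs_le.mp (h𝔄 e' he' i)
      have hdvd : (c:ℤ) ∣ (e'.1 i - e.1 i) := ⟨(v i : ℤ) - (v' i : ℤ), by linarith [h1 i]⟩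
      have hzero : e'.1 i - e.1 i = 0 := by
        refine Int.eq_zero_of_abs_lt_dvd hdvd ?_
        rw [abs_lt]
        constructor <;> [skip; skip] <;>
          · have hcz : (c : ℤ) = 2 * b + 1 := by rw [hc]; push_cast; ring
            omega
      have he1 : e'.1 i = e.1 i := by omega
      have := h1 i
      have hcpos : (0:ℤ) < (c:ℤ) := by positivity
      nlinarith [h1 i]
    have hveq : v = v' := funext fun i => Nat.cast_injective (hv i)
    subst hveq
    refine ⟨rfl, ?_⟩
    have he1 : e.1 = e'.1 := funext fun i => by have := h1 i; omega
    exact Prod.ext he1 h2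
  set A : (Fin d → ℕ) → Finset ((Fin d → ℤ) × Fin d) := fun v => 𝔄.image (sh v) with hA
  -- the threshold attached to an edge
  set ν : ((Fin d → ℤ) × Fin d) → ℕ := fun f =>
    if h : ∃ v : Fin d → ℕ, ∃ e ∈ 𝔄, sh v e = f then M h.choose else 0 with hνdef
  have hν : ∀ (v : Fin d → ℕ) (e : (Fin d → ℤ) × Fin d), e ∈ 𝔄 → ν (sh v e) = M v := by
    intro v e he
    have hex : ∃ v' : Fin d → ℕ, ∃ e' ∈ 𝔄, sh v' e' = sh v e := ⟨v, e, he, rfl⟩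
    rw [hνdef]
    simp only [dif_pos hex]
    obtain ⟨e', he', heq⟩ := hex.choose_spec
    rw [(hshinj _ _ _ _ he' he heq).1]
  set τ : ((Fin d → ℤ) × Fin d) → ℝ := fun f => g ((c * ν f + b : ℕ) : ℝ) with hτdef
  set t : (Fin d → ℕ) → ℝ := fun v => g ((c * M v + b : ℕ) : ℝ) with htdef
  have hτ : ∀ (v : Fin d → ℕ) (e : (Fin d → ℤ) × Fin d), e ∈ 𝔄 → τ (sh v e) = t v := by
    intro v e he
    rw [hτdef, htdef]
    simp only
    rw [hν v e he]
  -- the events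
  set E : (Fin d → ℕ) → Set Ω := fun v => ⋂ f ∈ A v, w f ⁻¹' Set.Iic (τ f) with hE
  have hmeasE : ∀ v, MeasurableSet (E v) :=
    fun v => Finset.measurableSet_biInter _ fun f _ => (hmeas f) measurableSet_Iic
  have hEmem : ∀ (v : Fin d → ℕ) (ω : Ω),
      ω ∈ E v ↔ ∀ e ∈ 𝔄, w (sh v e) ω ≤ t v := by
    intro v ω
    constructor
    · intro h e he
      have := Set.mem_iInter₂.mp h (sh v e) (Finset.mem_image_of_mem _ he)
      rw [Set.mem_preimage, Set.mem_Iic, hτ v e he] at this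
      exact this
    · intro h
      refine Set.mem_iInter₂.mpr fun f hf => ?_
      obtain ⟨e, he, rfl⟩ := Finset.mem_image.mp hf
      rw [Set.mem_preimage, Set.mem_Iic, hτ v e he]
      exact h e he
  -- individual probabilities
  have hp : ∀ (f : (Fin d → ℤ) × Fin d) (u : ℝ),
      μ (w f ⁻¹' Set.Iic u) = ENNReal.ofReal (F u) := by
    intro f u
    have h1 : μ (w f ⁻¹' Set.Iic u) = μ (w ((fun _ => 0), ⟨0, hd1⟩) ⁻¹' Set.Iic u) :=
      (hident f _).measure_mem_eq measurableSet_Iic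
    rw [h1, hF u, ENNReal.ofReal_toReal (measure_ne_top μ _)]
    rfl
  have hprodE : ∀ v, μ (E v) = ∏ f ∈ A v, μ (w f ⁻¹' Set.Iic (τ f)) := by
    intro v
    exact hindep.measure_inter_preimage_eq_mul (A v) (sets := fun f => Set.Iic (τ f))
      (fun f _ => measurableSet_Iic)
  have hμE : ∀ v, μ (E v) = ENNReal.ofReal (F (t v) ^ 𝔄.card) := by
    intro v
    rw [hprodE v]
    have hcong : ∀ f ∈ A v, μ (w f ⁻¹' Set.Iic (τ f)) = ENNReal.ofReal (F (t v)) := by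
      intro f hf
      obtain ⟨e, he, rfl⟩ := Finset.mem_image.mp hf
      rw [hp _ _, hτ v e he]
    rw [Finset.prod_congr rfl hcong, Finset.prod_const,
      Finset.card_image_of_injOn (fun e he e' he' h => (hshinj v v e e' he he' h).2),
      ← ENNReal.ofReal_pow (hF0 _)]
  -- enumeration of the index set
  haveI : Infinite (Fin d → ℕ) :=
    Infinite.of_injective (fun n : ℕ => (fun _ => n : Fin d → ℕ))
      (fun a b h => congrFun h i₀)
  obtain ⟨ρ⟩ : Nonempty (ℕ ≃ (Fin d → ℕ)) := nonempty_equiv_of_countable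
  set s : ℕ → Set Ω := fun n => E (ρ n) with hsdef
  -- independence
  have hAdisj : ∀ v v', v ≠ v' → Disjoint (A v) (A v') := by
    intro v v' hne
    rw [Finset.disjoint_left]
    rintro f hf hf'
    obtain ⟨e, he, rfl⟩ := Finset.mem_image.mp hf
    obtain ⟨e', he', heq⟩ := Finset.mem_image.mp hf'
    exact hne ((hshinj v' v e' e he' he heq).1).symm
  have hiIndepS : iIndepSet s μ := by
    rw [iIndepSet_iff_meas_biInter (fun n => hmeasE (ρ n))]
    intro K
    have hKdisj : (↑K : Set ℕ).PairwiseDisjoint (fun n => A (ρ n)) := by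
      intro n _ n' _ hnn'
      exact hAdisj _ _ fun h => hnn' (ρ.injective h)
    have hset : ⋂ n ∈ K, s n
        = ⋂ f ∈ K.biUnion (fun n => A (ρ n)), w f ⁻¹' Set.Iic (τ f) := by
      ext ω
      constructor
      · intro hω
        refine Set.mem_iInter₂.mpr fun f hf => ?_
        obtain ⟨n, hn, hfn⟩ := Finset.mem_biUnion.mp hf
        exact Set.mem_iInter₂.mp (Set.mem_iInter₂.mp hω n hn) f hfn
      · intro hω
        refine Set.mem_iInter₂.mpr fun n hn => ?_
        exact Set.mem_iInter₂.mpr fun f hf =>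
          Set.mem_iInter₂.mp hω f (Finset.mem_biUnion.mpr ⟨n, hn, hf⟩)
    have hbig := hindep.measure_inter_preimage_eq_mul (K.biUnion (fun n => A (ρ n)))
      (sets := fun f => Set.Iic (τ f)) (fun f _ => measurableSet_Iic)
    rw [hset, hbig, Finset.prod_biUnion hKdisj]
    exact Finset.prod_congr rfl fun n _ => (hprodE (ρ n)).symm
  -- divergence of the sum
  have hsum : ∑' n, μ (s n) = ⊤ := by
    have htv : ∑' v, μ (E v) = ⊤ := by
      set S : ℕ → Finset (Fin d → ℕ) := fun k =>
        Fintype.piFinset (fun i => if i = i₀ then {k} else Finset.range (k+1)) with hS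
      have hSsep : ∀ k k' v, v ∈ S k → v ∈ S k' → k = k' := by
        intro k k' v hv hv'
        have h1 := Fintype.mem_piFinset.mp hv i₀
        have h2 := Fintype.mem_piFinset.mp hv' i₀
        rw [if_pos rfl, Finset.mem_singleton] at h1 h2
        omega
      have hMv : ∀ k v, v ∈ S k → M v = k := by
        intro k v hv
        have hall := Fintype.mem_piFinset.mp hv
        refine le_antisymm (Finset.sup_le fun i _ => ?_) ?_
        · by_cases hi : i = i₀
          · have := hall i; rw [if_pos hi, Finset.mem_singleton] at this; omega
          · have := hall i; rw [if_neg hi, Finset.mem_range] at this; omega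
        · have := hall i₀; rw [if_pos rfl, Finset.mem_singleton] at this
          calc k = v i₀ := this.symm
            _ ≤ _ := Finset.le_sup (Finset.mem_univ i₀)
      have hcard : ∀ k, ((S k).card : ℝ≥0∞) = ENNReal.ofReal (((k:ℝ)+1)^(d-1)) := by
        intro k
        have h1 : (S k).card = (k+1)^(d-1) := by
          rw [hS]
          simp only
          rw [Fintype.card_piFinset]
          have h2 : ∀ i : Fin d, ((if i = i₀ then ({k} : Finset ℕ)
              else Finset.range (k+1)).card) = if i = i₀ then 1 else (k+1) := by
            intro i; by_cases hi : i = i₀ <;> simp [hi]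
          rw [Finset.prod_congr rfl (fun i _ => h2 i),
            ← Finset.mul_prod_erase Finset.univ _ (Finset.mem_univ i₀), if_pos rfl, one_mul,
            Finset.prod_congr rfl (fun i hi => if_neg (Finset.ne_of_mem_erase hi)),
            Finset.prod_const, Finset.card_erase_of_mem (Finset.mem_univ i₀),
            Finset.card_univ, Fintype.card_fin]
        rw [h1, ← ENNReal.ofReal_natCast]
        congr 1
        push_cast
        ring
      have hc1 : 1 ≤ (c:ℝ) := by rw [hc]; push_cast; linarith
      have hbc' : (b:ℝ) ≤ (c:ℝ) := by rw [hc]; push_cast; linarith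
      have hdiv2 := aux_div ψ hψanti hψ0 hψ1 (c:ℝ) (b:ℝ) hc1 (by positivity) hbc' d hdiv
      have heqk : ∀ k, ∑ v ∈ S k, μ (E v)
          = ((S k).card : ℝ≥0∞) * ENNReal.ofReal (ψ ((c:ℝ)*k+(b:ℝ))) := by
        intro k
        have hterm : ∀ v ∈ S k, μ (E v) = ENNReal.ofReal (ψ ((c:ℝ)*k+(b:ℝ))) := by
          intro v hv
          rw [hμE v, htdef]
          simp only
          rw [hMv k v hv]
          congr 2
          push_cast
          ring
        rw [Finset.sum_congr rfl hterm, Finset.sum_const, nsmul_eq_mul]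
      have htop : (⊤ : ℝ≥0∞) ≤ ∑' v, μ (E v) := by
        calc (⊤ : ℝ≥0∞) = ∑' k : ℕ, ENNReal.ofReal (((k:ℝ)+1)^(d-1))
              * ENNReal.ofReal (ψ ((c:ℝ)*k+(b:ℝ))) := hdiv2.symm
          _ = ∑' k : ℕ, ∑ v ∈ S k, μ (E v) := by
              refine tsum_congr fun k => ?_
              rw [heqk k, hcard k]
          _ ≤ ∑' v, μ (E v) := aux_tsum_blocks _ S hSsep
      exact top_le_iff.mp htop
    calc ∑' n, μ (s n) = ∑' v, μ (E v) := ρ.tsum_eq (fun v => μ (E v))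
      _ = ⊤ := htv
  -- second Borel–Cantelli
  have hBC : μ (limsup s atTop) = 1 :=
    measure_limsup_eq_one (fun n => hmeasE (ρ n)) hiIndepS hsum
  refine le_antisymm prob_le_one ?_
  rw [← hBC]
  refine measure_mono fun ω hω => ?_
  rw [mem_limsup_iff_frequently_mem] at hω
  have hI : {n : ℕ | ω ∈ s n}.Infinite := Nat.frequently_atTop_iff_infinite.mp hω
  have hV : {v : Fin d → ℕ | ω ∈ E v}.Infinite := by
    have himg : ρ '' {n : ℕ | ω ∈ s n} ⊆ {v : Fin d → ℕ | ω ∈ E v} := by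
      rintro v ⟨n, hn, rfl⟩
      exact hn
    exact Set.Infinite.mono himg (hI.image (ρ.injective.injOn))
  simp only [Set.mem_setOf_eq]
  rw [frequently_atTop]
  intro N
  obtain ⟨v, hvE, hvN⟩ : ∃ v, ω ∈ E v ∧ N ≤ M v := by
    by_contra hcon
    push_neg at hcon
    refine hV (Set.Finite.subset
      (Finset.finite_toSet (Fintype.piFinset fun _ : Fin d => Finset.range N)) ?_)
    intro v hv
    have hMvN := hcon v hv
    refine Finset.mem_coe.mpr (Fintype.mem_piFinset.mpr fun i => Finset.mem_range.mpr ?_)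
    calc v i ≤ M v := Finset.le_sup (Finset.mem_univ i)
      _ < N := hMvN
  refine ⟨c * M v, le_trans hvN (Nat.le_mul_of_pos_left _ (by omega)), ?_⟩
  refine ⟨fun i => (c : ℤ) * (v i : ℤ), ?_, ?_⟩
  · intro i
    show |(c:ℤ) * (v i : ℤ)| ≤ ((c * M v : ℕ) : ℤ) + (b:ℤ)
    rw [abs_of_nonneg (by positivity)]
    have h1 : v i ≤ M v := Finset.le_sup (Finset.mem_univ i)
    have h2 : (c : ℤ) * (v i : ℤ) ≤ (c : ℤ) * (M v : ℤ) :=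
      mul_le_mul_of_nonneg_left (by exact_mod_cast h1) (by positivity)
    have h3 : ((c * M v : ℕ) : ℤ) = (c:ℤ) * (M v : ℤ) := by push_cast; ring
    have h4 : (0:ℤ) ≤ (b:ℤ) := by positivity
    rw [h3]
    linarith
  · intro e he
    have hw := (hEmem v ω).mp hvE e he
    have hsh_eq : sh v e = (e.1 + fun i => (c : ℤ) * (v i : ℤ), e.2) := rfl
    rw [hsh_eq] at hw
    refine le_trans hw ?_
    rw [htdef]
    simp only
    refine hganti ?_
    push_cast
    linarith
end

section
/- Calculus lemma behind Corollary 3.3: Let d ≥ 2, m, κ ∈ ℕ, and let h: (0,∞) → [0,1] be a decreasing function such that u^d h(u)^m is bounded. Then for every ε ∈ [0, κ/(m+κ)), the integral ∫_0^∞ v^{d−1} h(v^{1−ε})^{m+κ} dv is finite. -/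
open MeasureTheory Set Real

/-- Calculus lemma behind Corollary 3.3.  Let `d ≥ 2`, `m, κ ≥ 1`, and let
`h : (0,∞) → [0,1]` be decreasing with `u^d h(u)^m` bounded.  Then for every
`ε ∈ [0, κ/(m+κ))` the integral `∫_0^∞ v^{d−1} h(v^{1−ε})^{m+κ} dv` is finite. -/
theorem stmt14 (d m κ : ℕ) (hd : 2 ≤ d) (hm : 0 < m) (hκ : 0 < κ)
    (h : ℝ → ℝ) (hanti : AntitoneOn h (Set.Ioi 0))
    (hrange : ∀ u : ℝ, 0 < u → h u ∈ Set.Icc (0 : ℝ) 1)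
    (M : ℝ) (hM : ∀ u : ℝ, 0 < u → u ^ d * h u ^ m ≤ M) :
    ∀ ε : ℝ, 0 ≤ ε → ε < (κ : ℝ) / ((m : ℝ) + κ) →
      ∫⁻ v in Set.Ioi (0 : ℝ),
        ENNReal.ofReal (v ^ (d - 1) * h (v ^ ((1 : ℝ) - ε)) ^ (m + κ)) < ⊤ := by
  intro ε hε0 hε1
  have hm' : (0:ℝ) < m := by exact_mod_cast hm
  have hκ' : (0:ℝ) < κ := by exact_mod_cast hκ
  have hmκ : (0:ℝ) < (m:ℝ) + κ := by positivity
  have hεκ : ε * ((m:ℝ) + κ) < κ := (lt_div_iff₀ hmκ).mp hε1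
  have hε2 : ε < 1 := by nlinarith
  have h1ε : (0:ℝ) < 1 - ε := by linarith
  have hM0 : (0:ℝ) ≤ M := by
    have h2 := hM 1 one_pos
    have h1 := hrange 1 one_pos
    simp at h2
    exact le_trans (pow_nonneg h1.1 m) h2
  set q : ℝ := ((m:ℝ) + κ) / m with hq
  have hq1 : (1:ℝ) < q := by
    rw [hq, lt_div_iff₀ hm']
    nlinarith
  have hq0 : (0:ℝ) ≤ q := by linarith
  set a : ℝ := ((d:ℝ) - 1) - (1 - ε) * (d * q) with ha
  have hd' : (2:ℝ) ≤ d := by exact_mod_cast hd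
  have hcrit : (1 - ε) * q > 1 := by
    rw [hq, gt_iff_lt, ← mul_div_assoc, lt_div_iff₀ hm']
    nlinarith
  have halt : a < -1 := by
    have : (d:ℝ) < (1 - ε) * (d * q) := by nlinarith
    rw [ha]; linarith
  -- key pointwise bound for v > 1
  have key : ∀ v : ℝ, 1 < v →
      v ^ (d - 1) * h (v ^ ((1 : ℝ) - ε)) ^ (m + κ) ≤ M ^ q * v ^ a := by
    intro v hv
    have hv0 : (0:ℝ) < v := lt_trans one_pos hv
    set u : ℝ := v ^ ((1:ℝ) - ε) with hu
    have hu0 : (0:ℝ) < u := Real.rpow_pos_of_pos hv0 _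
    have hhu := hrange u hu0
    have hud : (0:ℝ) < u ^ d := pow_pos hu0 d
    have hdiv : h u ^ m ≤ M / u ^ d := by
      rw [le_div_iff₀ hud]; linarith [hM u hu0, mul_comm (u ^ d) (h u ^ m)]
    have step1 : h u ^ (m + κ) = (h u ^ m) ^ q := by
      rw [← Real.rpow_natCast (h u) (m + κ), ← Real.rpow_natCast (h u) m,
        ← Real.rpow_mul hhu.1]
      congr 1
      push_cast
      rw [hq]
      field_simp
    have step2 : (h u ^ m) ^ q ≤ (M / u ^ d) ^ q :=
      Real.rpow_le_rpow (pow_nonneg hhu.1 m) hdiv hq0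
    have step3 : (M / u ^ d) ^ q = M ^ q / v ^ ((1 - ε) * (d * q)) := by
      rw [Real.div_rpow hM0 hud.le]
      congr 1
      rw [← Real.rpow_natCast u d, ← Real.rpow_mul hu0.le, hu,
        ← Real.rpow_mul hv0.le]
    have hvd : v ^ (d - 1) = v ^ ((d:ℝ) - 1) := by
      rw [← Real.rpow_natCast v (d - 1)]
      congr 1
      have : (1:ℕ) ≤ d := by omega
      push_cast [Nat.cast_sub this]
      ring
    calc v ^ (d - 1) * h u ^ (m + κ)
        ≤ v ^ (d - 1) * (M ^ q / v ^ ((1 - ε) * (d * q))) := by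
          rw [step1] at *
          exact mul_le_mul_of_nonneg_left (step2.trans step3.le) (pow_nonneg hv0.le _)
      _ = M ^ q * v ^ a := by
          have hvX : v ^ ((1 - ε) * ((d:ℝ) * q)) ≠ 0 := (Real.rpow_pos_of_pos hv0 _).ne'
          have hrw : v ^ ((d:ℝ) - 1) = v ^ a * v ^ ((1 - ε) * ((d:ℝ) * q)) := by
            rw [← Real.rpow_add hv0]; congr 1; rw [ha]; ring
          rw [hvd, hrw]
          field_simp
  -- split the integral
  have hsplit : (Ioi (0:ℝ)) = Ioc (0:ℝ) 1 ∪ Ioi 1 :=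
    (Set.Ioc_union_Ioi_eq_Ioi zero_le_one).symm
  rw [hsplit, lintegral_union measurableSet_Ioi (by
    rw [Set.disjoint_left]; intro x hx hx'
    exact absurd hx.2 (not_le.mpr hx'))]
  have part1 : ∫⁻ v in Ioc (0:ℝ) 1,
      ENNReal.ofReal (v ^ (d - 1) * h (v ^ ((1 : ℝ) - ε)) ^ (m + κ)) ≤ 1 := by
    have : ∫⁻ v in Ioc (0:ℝ) 1,
        ENNReal.ofReal (v ^ (d - 1) * h (v ^ ((1 : ℝ) - ε)) ^ (m + κ))
        ≤ ∫⁻ _ in Ioc (0:ℝ) 1, 1 := by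
      apply setLIntegral_mono_ae measurable_const.aemeasurable
      filter_upwards with v hv
      have hv0 : (0:ℝ) < v := hv.1
      have hu0 : (0:ℝ) < v ^ ((1:ℝ) - ε) := Real.rpow_pos_of_pos hv0 _
      have hhu := hrange _ hu0
      have h1 : v ^ (d - 1) ≤ 1 := pow_le_one₀ hv0.le hv.2
      have h2 : h (v ^ ((1:ℝ) - ε)) ^ (m + κ) ≤ 1 := pow_le_one₀ hhu.1 hhu.2
      have : v ^ (d - 1) * h (v ^ ((1:ℝ) - ε)) ^ (m + κ) ≤ 1 := by
        nlinarith [pow_nonneg hv0.le (d-1), pow_nonneg hhu.1 (m+κ)]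
      calc ENNReal.ofReal _ ≤ ENNReal.ofReal 1 := ENNReal.ofReal_le_ofReal this
        _ = 1 := ENNReal.ofReal_one
    simpa using this
  have part2 : ∫⁻ v in Ioi (1:ℝ),
      ENNReal.ofReal (v ^ (d - 1) * h (v ^ ((1 : ℝ) - ε)) ^ (m + κ)) < ⊤ := by
    have hint : IntegrableOn (fun v : ℝ => M ^ q * v ^ a) (Ioi 1) :=
      (integrableOn_Ioi_rpow_of_lt halt one_pos).const_mul _
    have hb : ∫⁻ v in Ioi (1:ℝ),
        ENNReal.ofReal (v ^ (d - 1) * h (v ^ ((1 : ℝ) - ε)) ^ (m + κ))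
        ≤ ∫⁻ v in Ioi (1:ℝ), ENNReal.ofReal (M ^ q * v ^ a) := by
      apply setLIntegral_mono_ae
      · exact ENNReal.measurable_ofReal.comp_aemeasurable hint.aemeasurable
      · filter_upwards with v hv
        exact ENNReal.ofReal_le_ofReal (key v hv)
    exact hb.trans_lt hint.lintegral_lt_top
  exact ENNReal.add_lt_top.mpr ⟨part1.trans_lt ENNReal.one_lt_top, part2⟩
end
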